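/- arXiv:1804.08585 — 3 statements merged into one kernel-verified Lean document; each statement's English description precedes it below -/
import Mathlib

section
/- Let E be an exact category with enough projectives and P a projective cover of E. Then E is cartesian closed if and only if P has generalised weak simple products. -/
open CategoryTheory Limits

namespace ExComp

universe v u

variable {E : Type u} [Category.{v} E]

/-- A regular epimorphism, as a property of a morphism. -/
def RegEpi {A B : E} (f : A ⟶ B) : Prop := Nonempty (RegularEpi f)

/-- An object is (regular) projective if its covariant hom functor sends regular
epimorphisms to surjections. -/
def RegProjective (X : E) : Prop :=
  ∀ ⦃A B : E⦄ (e : A ⟶ B), RegEpi e → ∀ f : X ⟶ B, ∃ g : X ⟶ A, g ≫ e = f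

/-- `E` has enough projectives: every object admits a regular epimorphism from a
projective object. -/
def EnoughRegProjectives (E : Type u) [Category.{v} E] : Prop :=
  ∀ A : E, ∃ (X : E) (p : X ⟶ A), RegProjective X ∧ RegEpi p

/-- An internal equivalence relation: a jointly monic, reflexive, symmetric and
transitive pair of parallel arrows. -/
structure IsEquivRelPair {R X : E} (r₁ r₂ : R ⟶ X) : Prop where
  jointlyMono : ∀ ⦃T : E⦄ (h k : T ⟶ R), h ≫ r₁ = k ≫ r₁ → h ≫ r₂ = k ≫ r₂ → h = k
  refl : ∃ d : X ⟶ R, d ≫ r₁ = 𝟙 X ∧ d ≫ r₂ = 𝟙 X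
  symm : ∃ s : R ⟶ R, s ≫ r₁ = r₂ ∧ s ≫ r₂ = r₁
  trans : ∀ ⦃T : E⦄ (p q : T ⟶ R), p ≫ r₂ = q ≫ r₁ →
    ∃ t : T ⟶ R, t ≫ r₁ = p ≫ r₁ ∧ t ≫ r₂ = q ≫ r₂

/-- An exact category: a finitely complete category where every morphism factors as a
regular epi followed by a mono, regular epis are stable under pullback, and every
internal equivalence relation is effective (it is the kernel pair of the coequaliser
it admits). -/
structure IsExact (E : Type u) [Category.{v} E] [HasFiniteLimits E] : Prop where
  factor : ∀ ⦃A B : E⦄ (f : A ⟶ B), ∃ (I : E) (e : A ⟶ I) (m : I ⟶ B),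
    RegEpi e ∧ Mono m ∧ e ≫ m = f
  stable : ∀ ⦃A B C : E⦄ (f : A ⟶ B) (g : C ⟶ B), RegEpi f → RegEpi (pullback.snd f g)
  effective : ∀ ⦃R X : E⦄ (r₁ r₂ : R ⟶ X), IsEquivRelPair r₁ r₂ →
    ∃ (Q : E) (q : X ⟶ Q) (w : r₁ ≫ q = r₂ ≫ q),
      Nonempty (IsColimit (Cofork.ofπ q w)) ∧ IsPullback r₁ r₂ q q

/-- A projective cover of `E`: a (full sub)collection of objects, each projective,
such that every object of `E` admits a regular epimorphism from one of them. -/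
def IsProjectiveCover (P : Set E) : Prop :=
  (∀ X ∈ P, RegProjective X) ∧ ∀ A : E, ∃ X ∈ P, ∃ p : X ⟶ A, RegEpi p

section FinLim
variable [HasFiniteLimits E]

/-- `X` is internally projective: every arrow `T ⨯ X ⟶ B` lifts along a regular epi
`A ↠ B` after passing to a regular epi `U ↠ T`. -/
def InternallyProjective (X : E) : Prop :=
  ∀ ⦃T A B : E⦄ (e : A ⟶ B), RegEpi e → ∀ f : T ⨯ X ⟶ B,
    ∃ (U : E) (u : U ⟶ T) (g : U ⨯ X ⟶ A), RegEpi u ∧ g ≫ e = prod.map u (𝟙 X) ≫ f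

/-- Cartesian closure, as a property: for every object `X` the functor `(−) ⨯ X` has a
right adjoint. -/
def CartesianClosedP (E : Type u) [Category.{v} E] [HasFiniteLimits E] : Prop :=
  ∀ X : E, (prod.functor.flip.obj X).IsLeftAdjoint

/-- Local cartesian closure, as a property: every slice is cartesian closed. -/
def LocallyCartesianClosedP (E : Type u) [Category.{v} E] [HasFiniteLimits E] : Prop :=
  ∀ (I : E) (F : Over I), ((prod.functor (C := Over I)).flip.obj F).IsLeftAdjoint

end FinLim

/-! ## Weak products and weak simple products -/

/-- A weak product in `P` of `X` and `Y`: a span through which every span in `P`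
factors (not necessarily uniquely). -/
structure IsWeakProduct (P : Set E) {X Y V : E} (p : V ⟶ X) (q : V ⟶ Y) : Prop where
  mem : V ∈ P
  lift : ∀ ⦃V' : E⦄, V' ∈ P → ∀ (p' : V' ⟶ X) (q' : V' ⟶ Y),
    ∃ h : V' ⟶ V, h ≫ p = p' ∧ h ≫ q = q'

/-- An arrow out of a weak product is determined by projections if it coequalises
every pair of arrows (from an object of `P`) coequalised by both projections. -/
def DeterminedByProjections (P : Set E) {V X Y Z : E} (p : V ⟶ X) (q : V ⟶ Y)
    (f : V ⟶ Z) : Prop :=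
  ∀ ⦃V' : E⦄, V' ∈ P → ∀ (h k : V' ⟶ V), h ≫ p = k ≫ p → h ≫ q = k ≫ q → h ≫ f = k ≫ f

/-- A candidate diagram for a weak simple product of a span `J ←f Y →g X`. -/
structure WSPCone (P : Set E) {J Y X : E} (f : Y ⟶ J) (g : Y ⟶ X)
    (W V : E) (w : W ⟶ J) (p : V ⟶ W) (q : V ⟶ X) (e : V ⟶ Y) : Prop where
  memW : W ∈ P
  wp : IsWeakProduct P p q
  det : DeterminedByProjections P p q e
  comm₁ : p ≫ w = e ≫ f
  comm₂ : q = e ≫ g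

/-- A weak simple product: a weakly terminal candidate diagram. -/
structure IsWeakSimpleProduct (P : Set E) {J Y X : E} (f : Y ⟶ J) (g : Y ⟶ X)
    (W V : E) (w : W ⟶ J) (p : V ⟶ W) (q : V ⟶ X) (e : V ⟶ Y) : Prop where
  cone : WSPCone P f g W V w p q e
  lift : ∀ ⦃W' V' : E⦄ (w' : W' ⟶ J) (p' : V' ⟶ W') (q' : V' ⟶ X) (e' : V' ⟶ Y),
    WSPCone P f g W' V' w' p' q' e' →
    ∃ (α : W' ⟶ W) (β : V' ⟶ V),
      α ≫ w = w' ∧ β ≫ p = p' ≫ α ∧ β ≫ q = q' ∧ β ≫ e = e'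

/-- `P` has weak simple products. -/
def HasWeakSimpleProducts (P : Set E) : Prop :=
  ∀ ⦃J Y X : E⦄, J ∈ P → Y ∈ P → X ∈ P → ∀ (f : Y ⟶ J) (g : Y ⟶ X),
    ∃ (W V : E) (w : W ⟶ J) (p : V ⟶ W) (q : V ⟶ X) (e : V ⟶ Y),
      IsWeakSimpleProduct P f g W V w p q e

/-! ## Pseudo simple products -/

/-- A candidate diagram for a pseudo simple product (no determinacy requirement). -/
structure PSPCone (P : Set E) {J Y X : E} (f : Y ⟶ J) (g : Y ⟶ X)
    (W V : E) (w : W ⟶ J) (p : V ⟶ W) (q : V ⟶ X) (e : V ⟶ Y) : Prop where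
  memW : W ∈ P
  wp : IsWeakProduct P p q
  comm₁ : p ≫ w = e ≫ f
  comm₂ : q = e ≫ g

/-- A pseudo simple product: a weakly terminal candidate diagram. -/
structure IsPseudoSimpleProduct (P : Set E) {J Y X : E} (f : Y ⟶ J) (g : Y ⟶ X)
    (W V : E) (w : W ⟶ J) (p : V ⟶ W) (q : V ⟶ X) (e : V ⟶ Y) : Prop where
  cone : PSPCone P f g W V w p q e
  lift : ∀ ⦃W' V' : E⦄ (w' : W' ⟶ J) (p' : V' ⟶ W') (q' : V' ⟶ X) (e' : V' ⟶ Y),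
    PSPCone P f g W' V' w' p' q' e' →
    ∃ (α : W' ⟶ W) (β : V' ⟶ V),
      α ≫ w = w' ∧ β ≫ p = p' ≫ α ∧ β ≫ q = q' ∧ β ≫ e = e'

/-- `P` has pseudo simple products. -/
def HasPseudoSimpleProducts (P : Set E) : Prop :=
  ∀ ⦃J Y X : E⦄, J ∈ P → Y ∈ P → X ∈ P → ∀ (f : Y ⟶ J) (g : Y ⟶ X),
    ∃ (W V : E) (w : W ⟶ J) (p : V ⟶ W) (q : V ⟶ X) (e : V ⟶ Y),
      IsPseudoSimpleProduct P f g W V w p q e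

/-! ## Weak exponentials -/

/-- A candidate diagram for a weak exponential of `X` and `Y`. -/
structure WExpCone (P : Set E) {X Y : E} (W V : E) (p : V ⟶ W) (q : V ⟶ X)
    (e : V ⟶ Y) : Prop where
  memW : W ∈ P
  wp : IsWeakProduct P p q
  det : DeterminedByProjections P p q e

/-- A weak exponential of `X` and `Y` in `P`. -/
structure IsWeakExponential (P : Set E) {X Y : E} (W V : E) (p : V ⟶ W) (q : V ⟶ X)
    (e : V ⟶ Y) : Prop where
  cone : WExpCone P W V p q e
  lift : ∀ ⦃W' V' : E⦄ (p' : V' ⟶ W') (q' : V' ⟶ X) (e' : V' ⟶ Y),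
    WExpCone P W' V' p' q' e' →
    ∃ (α : W' ⟶ W) (β : V' ⟶ V), β ≫ p = p' ≫ α ∧ β ≫ q = q' ∧ β ≫ e = e'

/-- `P` has weak exponentials. -/
def HasWeakExponentials (P : Set E) : Prop :=
  ∀ ⦃X Y : E⦄, X ∈ P → Y ∈ P →
    ∃ (W V : E) (p : V ⟶ W) (q : V ⟶ X) (e : V ⟶ Y), IsWeakExponential P W V p q e

/-- A quasi exponential of `X` and `B`: the weak universal property of an exponential
restricted to projective sources. -/
def IsQuasiExponential [HasFiniteLimits E] (P : Set E) (X : E) {B : E} (W : E)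
    (e : W ⨯ X ⟶ B) : Prop :=
  ∀ ⦃Z : E⦄, Z ∈ P → ∀ f : Z ⨯ X ⟶ B, ∃ g : Z ⟶ W, prod.map g (𝟙 X) ≫ e = f

section FinLim2
variable [HasFiniteLimits E]

/-! ## Pseudo equivalence relations, equalities and generalised weak (simple) products -/

/-- A pseudo equivalence relation: a pair of parallel arrows whose image in `E` is an
equivalence relation. -/
def IsPseudoEquivRel {Y1 Y0 : E} (y₁ y₂ : Y1 ⟶ Y0) : Prop :=
  ∃ (R : E) (e : Y1 ⟶ R) (m : R ⟶ Y0 ⨯ Y0), RegEpi e ∧ Mono m ∧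
    e ≫ m = prod.lift y₁ y₂ ∧ IsEquivRelPair (m ≫ prod.fst) (m ≫ prod.snd)

/-- An equality for a weak limit, relative to the comparison arrow `c : V0 ⟶ L` into
the actual limit: a pseudo equivalence relation `v₁, v₂ : V1 ⇉ V0` in `P` such that
`c` is a coequaliser of `v₁, v₂` and `V1` regularly covers the kernel pair of `c`. -/
structure IsEqualityFor (P : Set E) {V1 V0 L : E} (c : V0 ⟶ L) (v₁ v₂ : V1 ⟶ V0) :
    Prop where
  mem : V1 ∈ P
  per : IsPseudoEquivRel v₁ v₂
  w : v₁ ≫ c = v₂ ≫ c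
  coeq : Nonempty (IsColimit (Cofork.ofπ c w))
  cover : RegEpi (pullback.lift v₁ v₂ w)

/-- An arrow `e : V ⟶ Z0` out of a weak product with projections `p, q` preserves
projections with respect to a pseudo equivalence relation `z₁, z₂ : Z1 ⇉ Z0` if for
any equality `v₁, v₂ : V1 ⇉ V` for the weak product there is `t : V1 ⟶ Z1` with
`t ≫ zᵢ = vᵢ ≫ e`. -/
def PreservesProjWP (P : Set E) {V X Y Z1 Z0 : E} (p : V ⟶ X) (q : V ⟶ Y)
    (z₁ z₂ : Z1 ⟶ Z0) (e : V ⟶ Z0) : Prop :=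
  ∀ ⦃V1 : E⦄ (v₁ v₂ : V1 ⟶ V), IsEqualityFor P (prod.lift p q) v₁ v₂ →
    ∃ t : V1 ⟶ Z1, t ≫ z₁ = v₁ ≫ e ∧ t ≫ z₂ = v₂ ≫ e

/-- A candidate diagram for a generalised weak simple product of `f` and `g` with
respect to the pseudo equivalence relation `y₁, y₂`. -/
structure GWSPCone (P : Set E) {Y1 Y0 J X : E} (y₁ y₂ : Y1 ⟶ Y0) (f : Y0 ⟶ J)
    (g : Y0 ⟶ X) (W V : E) (w : W ⟶ J) (p : V ⟶ W) (q : V ⟶ X) (e : V ⟶ Y0) :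
    Prop where
  memW : W ∈ P
  wp : IsWeakProduct P p q
  pres : PreservesProjWP P p q y₁ y₂ e
  comm₁ : p ≫ w = e ≫ f
  comm₂ : q = e ≫ g

/-- A generalised weak simple product: a weakly terminal candidate diagram. -/
structure IsGWSP (P : Set E) {Y1 Y0 J X : E} (y₁ y₂ : Y1 ⟶ Y0) (f : Y0 ⟶ J)
    (g : Y0 ⟶ X) (W V : E) (w : W ⟶ J) (p : V ⟶ W) (q : V ⟶ X) (e : V ⟶ Y0) :
    Prop where
  cone : GWSPCone P y₁ y₂ f g W V w p q e
  lift : ∀ ⦃W' V' : E⦄ (w' : W' ⟶ J) (p' : V' ⟶ W') (q' : V' ⟶ X) (e' : V' ⟶ Y0),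
    GWSPCone P y₁ y₂ f g W' V' w' p' q' e' →
    ∃ (α : W' ⟶ W) (β : V' ⟶ V),
      α ≫ w = w' ∧ β ≫ p = p' ≫ α ∧ β ≫ q = q' ∧ β ≫ e = e'

/-- `P` has generalised weak simple products. -/
def HasGWSP (P : Set E) : Prop :=
  ∀ ⦃Y1 Y0 J X : E⦄, Y1 ∈ P → Y0 ∈ P → J ∈ P → X ∈ P →
    ∀ (y₁ y₂ : Y1 ⟶ Y0), IsPseudoEquivRel y₁ y₂ →
    ∀ (f : Y0 ⟶ J) (g : Y0 ⟶ X), y₁ ≫ f = y₂ ≫ f → y₁ ≫ g = y₂ ≫ g →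
    ∃ (W V : E) (w : W ⟶ J) (p : V ⟶ W) (q : V ⟶ X) (e : V ⟶ Y0),
      IsGWSP P y₁ y₂ f g W V w p q e

/-- A candidate diagram for a generalised weak exponential of `X` and `y₁, y₂`. -/
structure GWExpCone (P : Set E) {X Y1 Y0 : E} (y₁ y₂ : Y1 ⟶ Y0)
    (W V : E) (p : V ⟶ W) (q : V ⟶ X) (e : V ⟶ Y0) : Prop where
  memW : W ∈ P
  wp : IsWeakProduct P p q
  pres : PreservesProjWP P p q y₁ y₂ e

/-- A generalised weak exponential of `X` and a pseudo equivalence relation. -/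
structure IsGWExp (P : Set E) {X Y1 Y0 : E} (y₁ y₂ : Y1 ⟶ Y0)
    (W V : E) (p : V ⟶ W) (q : V ⟶ X) (e : V ⟶ Y0) : Prop where
  cone : GWExpCone P y₁ y₂ W V p q e
  lift : ∀ ⦃W' V' : E⦄ (p' : V' ⟶ W') (q' : V' ⟶ X) (e' : V' ⟶ Y0),
    GWExpCone P y₁ y₂ W' V' p' q' e' →
    ∃ (α : W' ⟶ W) (β : V' ⟶ V), β ≫ p = p' ≫ α ∧ β ≫ q = q' ∧ β ≫ e = e'

/-! ## Weak pullbacks and generalised weak dependent products -/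

/-- A weak pullback in `P` of the cospan `X →f J ←w W`. -/
structure IsWeakPullback (P : Set E) {X J W V : E} (f : X ⟶ J) (w : W ⟶ J)
    (a : V ⟶ X) (b : V ⟶ W) : Prop where
  mem : V ∈ P
  comm : a ≫ f = b ≫ w
  lift : ∀ ⦃V' : E⦄, V' ∈ P → ∀ (a' : V' ⟶ X) (b' : V' ⟶ W), a' ≫ f = b' ≫ w →
    ∃ h : V' ⟶ V, h ≫ a = a' ∧ h ≫ b = b'

/-- Preservation of projections for an arrow out of a weak pullback. -/
def PreservesProjWPB (P : Set E) {V X J W Z1 Z0 : E} (f : X ⟶ J) (w : W ⟶ J)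
    (a : V ⟶ X) (b : V ⟶ W) (h : a ≫ f = b ≫ w) (z₁ z₂ : Z1 ⟶ Z0) (e : V ⟶ Z0) :
    Prop :=
  ∀ ⦃V1 : E⦄ (v₁ v₂ : V1 ⟶ V), IsEqualityFor P (pullback.lift a b h) v₁ v₂ →
    ∃ t : V1 ⟶ Z1, t ≫ z₁ = v₁ ≫ e ∧ t ≫ z₂ = v₂ ≫ e

/-- A candidate diagram for a generalised weak dependent product of `g : Y0 ⟶ X`
along `f : X ⟶ J` with respect to `y₁, y₂`. -/
structure GWDPCone (P : Set E) {Y1 Y0 X J : E} (y₁ y₂ : Y1 ⟶ Y0) (g : Y0 ⟶ X)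
    (f : X ⟶ J) (W V : E) (w : W ⟶ J) (a : V ⟶ X) (b : V ⟶ W) (e : V ⟶ Y0) :
    Prop where
  memW : W ∈ P
  comm : a ≫ f = b ≫ w
  wpb : IsWeakPullback P f w a b
  overX : e ≫ g = a
  pres : PreservesProjWPB P f w a b comm y₁ y₂ e

/-- A generalised weak dependent product: a weakly terminal candidate diagram. -/
structure IsGWDP (P : Set E) {Y1 Y0 X J : E} (y₁ y₂ : Y1 ⟶ Y0) (g : Y0 ⟶ X)
    (f : X ⟶ J) (W V : E) (w : W ⟶ J) (a : V ⟶ X) (b : V ⟶ W) (e : V ⟶ Y0) :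
    Prop where
  cone : GWDPCone P y₁ y₂ g f W V w a b e
  lift : ∀ ⦃W' V' : E⦄ (w' : W' ⟶ J) (a' : V' ⟶ X) (b' : V' ⟶ W') (e' : V' ⟶ Y0),
    GWDPCone P y₁ y₂ g f W' V' w' a' b' e' →
    ∃ (α : W' ⟶ W) (β : V' ⟶ V),
      α ≫ w = w' ∧ β ≫ a = a' ∧ β ≫ b = b' ≫ α ∧ β ≫ e = e'

/-- `P` has generalised weak dependent products (i.e. `P` is weakly locally cartesian
closed). -/
def HasGWDP (P : Set E) : Prop :=
  ∀ ⦃Y1 Y0 X J : E⦄, Y1 ∈ P → Y0 ∈ P → X ∈ P → J ∈ P →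
    ∀ (y₁ y₂ : Y1 ⟶ Y0), IsPseudoEquivRel y₁ y₂ →
    ∀ (g : Y0 ⟶ X) (f : X ⟶ J), y₁ ≫ g = y₂ ≫ g →
    ∃ (W V : E) (w : W ⟶ J) (a : V ⟶ X) (b : V ⟶ W) (e : V ⟶ Y0),
      IsGWDP P y₁ y₂ g f W V w a b e

/-! ## The functor `w_X` on subobjects induced by weak simple products -/

/-- The adjunction property of the weak-simple-product operation `w_X` on subobjects:
for every subobject `a : A ↪ J ⨯ X`, every `P`-cover `Y ↠ A`, every weak simple
product `W → J` of the induced span and every image factorisation `W ↠ I ↪ J` of it,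
the subobject `I ↪ J` is a value at `a` of a right adjoint to
`(−) ⨯ X : Sub(J) → Sub(J ⨯ X)`. -/
def WAdj (P : Set E) (J X : E) : Prop :=
  ∀ ⦃A : E⦄ (a : A ⟶ J ⨯ X), Mono a →
  ∀ ⦃Y : E⦄, Y ∈ P → ∀ (c : Y ⟶ A), RegEpi c →
  ∀ ⦃W V : E⦄ (w : W ⟶ J) (p : V ⟶ W) (q : V ⟶ X) (e : V ⟶ Y),
    IsWeakSimpleProduct P (c ≫ a ≫ prod.fst) (c ≫ a ≫ prod.snd) W V w p q e →
  ∀ ⦃I : E⦄ (ew : W ⟶ I) (m : I ⟶ J), RegEpi ew → Mono m → ew ≫ m = w →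
  ∀ ⦃B : E⦄ (b : B ⟶ J), Mono b →
    ((∃ t : B ⨯ X ⟶ A, t ≫ a = prod.map b (𝟙 X)) ↔ ∃ s : B ⟶ I, s ≫ m = b)

/-! ## Weak dependent products (à la Carboni–Rosolini) -/

/-- `P` has weak dependent products: for `f : X ⟶ J` and `g : Y ⟶ X` in `P` there are
`w : W ⟶ J` in `P` and a surjection `Hom_{P/J}(h, w) → Hom_{P/X}(f*(h), g)` natural
in `h ∈ P/J`. -/
def HasWeakDependentProducts (P : Set E) : Prop :=
  ∀ ⦃X J Y : E⦄, X ∈ P → J ∈ P → Y ∈ P → ∀ (f : X ⟶ J) (g : Y ⟶ X),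
    ∃ (W : E) (_ : W ∈ P) (w : W ⟶ J)
      (ε : ∀ ⦃T : E⦄, T ∈ P → ∀ (h : T ⟶ J) (k : T ⟶ W), k ≫ w = h →
        (pullback h f ⟶ Y)),
      (∀ ⦃T : E⦄ (hT : T ∈ P) (h : T ⟶ J) (k : T ⟶ W) (hk : k ≫ w = h),
         ε hT h k hk ≫ g = pullback.snd h f) ∧
      (∀ ⦃T : E⦄ (hT : T ∈ P) (h : T ⟶ J) (d : pullback h f ⟶ Y),
         d ≫ g = pullback.snd h f → ∃ (k : T ⟶ W) (hk : k ≫ w = h), ε hT h k hk = d) ∧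
      (∀ ⦃T' T : E⦄ (hT' : T' ∈ P) (hT : T ∈ P) (u : T' ⟶ T) (h : T ⟶ J) (k : T ⟶ W)
         (hk : k ≫ w = h),
         ε hT' (u ≫ h) (u ≫ k) (by rw [Category.assoc, hk]) =
           pullback.map (u ≫ h) f h f u (𝟙 X) (𝟙 J) (by simp) (by simp) ≫ ε hT h k hk)

end FinLim2

attribute [local simp] prod.lift_fst prod.lift_snd prod.lift_fst_assoc prod.lift_snd_assoc
  pullback.lift_fst pullback.lift_snd pullback.lift_fst_assoc pullback.lift_snd_assoc
  equalizer.lift_ι equalizer.lift_ι_assoc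


/-! ## Auxiliary lemmas -/

section Basics
variable {E : Type u} [Category.{v} E]

lemma RegEpi.epi {A B : E} {f : A ⟶ B} (h : RegEpi f) : Epi f := by
  obtain ⟨h⟩ := h; exact RegularEpi.epi f h

lemma regEpi_of_isColimit {R A B : E} {r₁ r₂ : R ⟶ A} {q : A ⟶ B} {w : r₁ ≫ q = r₂ ≫ q}
    (h : IsColimit (Cofork.ofπ q w)) : RegEpi q :=
  ⟨⟨R, r₁, r₂, w, h⟩⟩

lemma cofork_π_desc {R A B Z : E} {r₁ r₂ : R ⟶ A} {q : A ⟶ B} {w : r₁ ≫ q = r₂ ≫ q}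
    (colim : IsColimit (Cofork.ofπ q w)) (k : A ⟶ Z) (hk : r₁ ≫ k = r₂ ≫ k) :
    q ≫ Cofork.IsColimit.desc colim k hk = k := by
  simpa using Cofork.IsColimit.π_desc' colim k hk

/-- Postcomposition of a regular epi with an iso. -/
lemma regEpi_comp_iso {A B C : E} {f : A ⟶ B} (g : B ⟶ C) [IsIso g] (hf : RegEpi f) :
    RegEpi (f ≫ g) := by
  obtain ⟨⟨R, a, b, w, colim⟩⟩ := hf
  haveI : Epi f := (regEpi_of_isColimit colim).epi
  refine ⟨⟨R, a, b, by rw [reassoc_of% w], ?_⟩⟩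
  refine Cofork.IsColimit.mk _ (fun s => inv g ≫ Cofork.IsColimit.desc colim s.π s.condition)
    (fun s => ?_) (fun s m hm => ?_)
  · have := cofork_π_desc colim s.π s.condition
    simp only [Cofork.π_ofπ, Category.assoc]
    rw [IsIso.hom_inv_id_assoc, this]
  · have h1 : f ≫ g ≫ m = f ≫ Cofork.IsColimit.desc colim s.π s.condition := by
      rw [cofork_π_desc colim s.π s.condition]
      simpa using hm
    rw [cancel_epi f] at h1
    show m = inv g ≫ Cofork.IsColimit.desc colim s.π s.condition
    rw [← h1, IsIso.inv_hom_id_assoc]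

/-- Precomposition of a regular epi with an iso. -/
lemma iso_comp_regEpi {A B C : E} (g : A ⟶ B) {f : B ⟶ C} [IsIso g] (hf : RegEpi f) :
    RegEpi (g ≫ f) := by
  obtain ⟨⟨R, a, b, w, colim⟩⟩ := hf
  haveI : Epi f := (regEpi_of_isColimit colim).epi
  have hw : (a ≫ inv g) ≫ g ≫ f = (b ≫ inv g) ≫ g ≫ f := by simp [w]
  refine ⟨⟨R, a ≫ inv g, b ≫ inv g, hw, ?_⟩⟩
  refine Cofork.IsColimit.mk _
    (fun s => Cofork.IsColimit.desc colim (inv g ≫ s.π)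
      (by have := s.condition; simp only [Category.assoc] at this; simpa using this))
    (fun s => ?_) (fun s m hm => ?_)
  · have := cofork_π_desc colim (inv g ≫ s.π)
      (by have := s.condition; simp only [Category.assoc] at this; simpa using this)
    simp only [Cofork.π_ofπ, Category.assoc]
    rw [this, IsIso.hom_inv_id_assoc]
  · have h1 : f ≫ m = f ≫ Cofork.IsColimit.desc colim (inv g ≫ s.π)
        (by have := s.condition; simp only [Category.assoc] at this; simpa using this) := by
      rw [cofork_π_desc]
      rw [← cancel_epi g, IsIso.hom_inv_id_assoc]
      simpa using hm
    rw [cancel_epi f] at h1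
    exact h1

lemma regEpi_comp {A B C : E} {f : A ⟶ B} {g : B ⟶ C}
    (hfac : ∀ ⦃A B : E⦄ (f : A ⟶ B), ∃ (I : E) (e : A ⟶ I) (m : I ⟶ B),
      RegEpi e ∧ Mono m ∧ e ≫ m = f)
    (hf : RegEpi f) (hg : RegEpi g) : RegEpi (f ≫ g) := by
  obtain ⟨hf'⟩ := hf; obtain ⟨hg'⟩ := hg
  haveI := isRegularEpi_of_regularEpi hf'; haveI := isRegularEpi_of_regularEpi hg'
  haveI : StrongEpi (f ≫ g) := strongEpi_comp f g
  obtain ⟨I, e, m, he, hm, hem⟩ := hfac (f ≫ g)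
  haveI := hm
  have sq : CommSq e (f ≫ g) m (𝟙 C) := ⟨by simpa using hem⟩
  haveI : IsSplitEpi m := ⟨⟨⟨sq.lift, by simpa using sq.fac_right⟩⟩⟩
  haveI : IsIso m := isIso_of_mono_of_isSplitEpi m
  rw [← hem]; exact regEpi_comp_iso m he

/-- If `h ≫ g` is a regular epi then so is `g`, in the presence of factorisations. -/
lemma regEpi_of_comp {A B C : E} {h : A ⟶ B} {g : B ⟶ C}
    (hfac : ∀ ⦃A B : E⦄ (f : A ⟶ B), ∃ (I : E) (e : A ⟶ I) (m : I ⟶ B),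
      RegEpi e ∧ Mono m ∧ e ≫ m = f)
    (hhg : RegEpi (h ≫ g)) : RegEpi g := by
  obtain ⟨I, e, m, he, hm, hem⟩ := hfac g
  haveI := hm
  haveI : Epi (h ≫ g) := hhg.epi
  obtain ⟨⟨R, a, b, w, colim⟩⟩ := hhg
  have hab : a ≫ h ≫ e = b ≫ h ≫ e := by
    rw [← cancel_mono m]
    simp only [Category.assoc, hem]
    simpa using w
  have hab' : a ≫ (h ≫ e) = b ≫ (h ≫ e) := by simpa using hab
  have hdesc : (h ≫ g) ≫ Cofork.IsColimit.desc colim (h ≫ e) hab' = h ≫ e :=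
    cofork_π_desc colim _ _
  haveI : IsSplitEpi m := by
    refine ⟨⟨⟨Cofork.IsColimit.desc colim (h ≫ e) hab', ?_⟩⟩⟩
    rw [← cancel_epi (h ≫ g)]
    rw [← Category.assoc, hdesc]
    simp [hem]
  haveI : IsIso m := isIso_of_mono_of_isSplitEpi m
  rw [← hem]; exact regEpi_comp_iso m he

section WithLimits
variable [HasFiniteLimits E]

/-- Regular epis are stable under arbitrary pullback squares. -/
lemma regEpi_of_isPullback (hE : IsExact E) {P' A B C : E} {fst : P' ⟶ A} {snd : P' ⟶ C}
    {f : A ⟶ B} {g : C ⟶ B} (sq : IsPullback fst snd f g) (hf : RegEpi f) : RegEpi snd := by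
  have h1 : RegEpi (pullback.snd f g) := hE.stable f g hf
  have h2 : sq.isoPullback.hom ≫ pullback.snd f g = snd := sq.isoPullback_hom_snd
  rw [← h2]
  exact iso_comp_regEpi _ h1

lemma isPullback_prodMap_left {A B C : E} (u : A ⟶ B) :
    IsPullback (prod.fst : A ⨯ C ⟶ A) (prod.map u (𝟙 C)) u (prod.fst : B ⨯ C ⟶ B) := by
  refine IsPullback.of_isLimit (PullbackCone.IsLimit.mk
    ((prod.map_fst u (𝟙 C)).symm)
    (fun s => prod.lift s.fst (s.snd ≫ prod.snd))
    (fun s => by simp) (fun s => ?_) (fun s m hm1 hm2 => ?_))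
  · apply Limits.prod.hom_ext
    · simpa using s.condition
    · simp
  · apply Limits.prod.hom_ext
    · simpa using hm1
    · have := hm2 =≫ (prod.snd : B ⨯ C ⟶ C)
      simpa using this

lemma isPullback_prodMap_right {A C D : E} (v : C ⟶ D) :
    IsPullback (prod.snd : A ⨯ C ⟶ C) (prod.map (𝟙 A) v) v (prod.snd : A ⨯ D ⟶ D) := by
  refine IsPullback.of_isLimit (PullbackCone.IsLimit.mk
    ((prod.map_snd (𝟙 A) v).symm)
    (fun s => prod.lift (s.snd ≫ prod.fst) s.fst)
    (fun s => by simp) (fun s => ?_) (fun s m hm1 hm2 => ?_))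
  · apply Limits.prod.hom_ext
    · simp
    · simpa using s.condition
  · apply Limits.prod.hom_ext
    · have := hm2 =≫ (prod.fst : A ⨯ D ⟶ A)
      simpa using this
    · simpa using hm1

lemma regEpi_prodMap (hE : IsExact E) {A B C D : E} {u : A ⟶ B} {v : C ⟶ D}
    (hu : RegEpi u) (hv : RegEpi v) : RegEpi (prod.map u v) := by
  have h1 : RegEpi (prod.map u (𝟙 C)) := regEpi_of_isPullback hE (isPullback_prodMap_left u) hu
  have h2 : RegEpi (prod.map (𝟙 B) v) := regEpi_of_isPullback hE (isPullback_prodMap_right v) hv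
  have : prod.map u v = prod.map u (𝟙 C) ≫ prod.map (𝟙 B) v := by simp
  rw [this]
  exact regEpi_comp hE.factor h1 h2

end WithLimits
end Basics

section KernelPairs
variable {E : Type u} [Category.{v} E] [HasFiniteLimits E]

/-- Descent along a regular epi whose kernel pair coequalises a morphism. -/
lemma regEpi_desc {A Q Z : E} {q : A ⟶ Q} (hq : RegEpi q) (h : A ⟶ Z)
    (hcoeq : pullback.fst q q ≫ h = pullback.snd q q ≫ h) : ∃ l : Q ⟶ Z, q ≫ l = h := by
  obtain ⟨⟨R, a, b, w, colim⟩⟩ := hq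
  have hab : a ≫ h = b ≫ h := by
    have ha : pullback.lift a b w ≫ pullback.fst q q = a := pullback.lift_fst _ _ _
    have hb : pullback.lift a b w ≫ pullback.snd q q = b := pullback.lift_snd _ _ _
    calc a ≫ h = pullback.lift a b w ≫ pullback.fst q q ≫ h := by rw [← Category.assoc, ha]
    _ = pullback.lift a b w ≫ pullback.snd q q ≫ h := by rw [hcoeq]
    _ = b ≫ h := by rw [← Category.assoc, hb]
  exact ⟨Cofork.IsColimit.desc colim h hab, cofork_π_desc colim h hab⟩

/-- Descent along a regular epi, given a cover of its kernel pair coequalising a morphism. -/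
lemma regEpi_desc_of_cover {A Q Z V1 : E} {q : A ⟶ Q} (hq : RegEpi q)
    (v₁ v₂ : V1 ⟶ A) (w : v₁ ≫ q = v₂ ≫ q) (hepi : Epi (pullback.lift v₁ v₂ w))
    (h : A ⟶ Z) (hh : v₁ ≫ h = v₂ ≫ h) : ∃ l : Q ⟶ Z, q ≫ l = h := by
  apply regEpi_desc hq h
  rw [← cancel_epi (pullback.lift v₁ v₂ w)]
  simpa using hh

lemma kernelPair_isEquivRelPair {A B : E} (f : A ⟶ B) :
    IsEquivRelPair (pullback.fst f f) (pullback.snd f f) := by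
  constructor
  · intro T h k h1 h2
    exact pullback.hom_ext h1 h2
  · exact ⟨pullback.lift (𝟙 A) (𝟙 A) rfl, by simp, by simp⟩
  · exact ⟨pullback.lift (pullback.snd f f) (pullback.fst f f) pullback.condition.symm,
      by simp, by simp⟩
  · intro T p q hpq
    have hc : (p ≫ pullback.fst f f) ≫ f = (q ≫ pullback.snd f f) ≫ f := by
      rw [Category.assoc, pullback.condition, ← Category.assoc, hpq, Category.assoc,
        pullback.condition, Category.assoc]
    exact ⟨pullback.lift _ _ hc, by simp, by simp⟩

lemma mono_kernelPair_pair {A B : E} (f : A ⟶ B) :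
    Mono (prod.lift (pullback.fst f f) (pullback.snd f f)) := by
  constructor
  intro T h k hk
  apply pullback.hom_ext
  · have := hk =≫ prod.fst; simpa using this
  · have := hk =≫ prod.snd; simpa using this

lemma isPseudoEquivRel_of_cover {V1 A B : E} (f : A ⟶ B) {k : V1 ⟶ pullback f f}
    (hk : RegEpi k) :
    IsPseudoEquivRel (k ≫ pullback.fst f f) (k ≫ pullback.snd f f) := by
  refine ⟨pullback f f, k, prod.lift (pullback.fst f f) (pullback.snd f f), hk,
    mono_kernelPair_pair f, by simp, ?_⟩
  have h1 : prod.lift (pullback.fst f f) (pullback.snd f f) ≫ prod.fst = pullback.fst f f := by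
    simp
  have h2 : prod.lift (pullback.fst f f) (pullback.snd f f) ≫ prod.snd = pullback.snd f f := by
    simp
  rw [h1, h2]
  exact kernelPair_isEquivRelPair f

/-- Any regular epi admits an equality (in the sense of `IsEqualityFor`) given enough
projectives. -/
lemma exists_isEqualityFor {P : Set E} (hP : IsProjectiveCover P) {V L : E} (c : V ⟶ L)
    (hc : RegEpi c) :
    ∃ (V1 : E) (v₁ v₂ : V1 ⟶ V), IsEqualityFor P c v₁ v₂ := by
  obtain ⟨V1, hV1, k, hk⟩ := hP.2 (pullback c c)
  refine ⟨V1, k ≫ pullback.fst c c, k ≫ pullback.snd c c, ?_⟩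
  have w : (k ≫ pullback.fst c c) ≫ c = (k ≫ pullback.snd c c) ≫ c := by
    simp only [Category.assoc, pullback.condition]
  refine ⟨hV1, isPseudoEquivRel_of_cover c hk, w, ?_, ?_⟩
  · -- c is the coequalizer of the covered kernel pair
    haveI : Epi k := hk.epi
    refine ⟨Cofork.IsColimit.mk _ (fun s => ?_) (fun s => ?_) (fun s m hm => ?_)⟩
    · have hs : pullback.fst c c ≫ s.π = pullback.snd c c ≫ s.π := by
        rw [← cancel_epi k]
        have := s.condition
        simpa using this
      exact (regEpi_desc hc s.π hs).choose
    · have hs : pullback.fst c c ≫ s.π = pullback.snd c c ≫ s.π := by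
        rw [← cancel_epi k]
        have := s.condition
        simpa using this
      have := (regEpi_desc hc s.π hs).choose_spec
      simpa using this
    · haveI : Epi c := hc.epi
      have hs : pullback.fst c c ≫ s.π = pullback.snd c c ≫ s.π := by
        rw [← cancel_epi k]
        have := s.condition
        simpa using this
      have h2 := (regEpi_desc hc s.π hs).choose_spec
      rw [← cancel_epi c, h2]
      simpa using hm
  · -- the canonical map to the kernel pair is `k` itself
    have : pullback.lift (k ≫ pullback.fst c c) (k ≫ pullback.snd c c) w = k := by
      apply pullback.hom_ext <;> simp
    rw [this]
    exact hk

/-- A projective cover of a binary product is a weak product. -/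
lemma isWeakProduct_of_cover {P : Set E} (hP : IsProjectiveCover P) {V X Y : E} (hV : V ∈ P)
    {c : V ⟶ X ⨯ Y} (hc : RegEpi c) : IsWeakProduct P (c ≫ prod.fst) (c ≫ prod.snd) := by
  refine ⟨hV, ?_⟩
  intro V' hV' p' q'
  obtain ⟨h, hh⟩ := hP.1 V' hV' c hc (prod.lift p' q')
  exact ⟨h, by rw [← Category.assoc, hh]; simp, by rw [← Category.assoc, hh]; simp⟩

/-- The comparison map of a weak product is a regular epi. -/
lemma regEpi_lift_of_isWeakProduct (hE : IsExact E) {P : Set E} (hP : IsProjectiveCover P)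
    {V X Y : E} {p : V ⟶ X} {q : V ⟶ Y} (h : IsWeakProduct P p q) :
    RegEpi (prod.lift p q) := by
  obtain ⟨U, hU, cU, hcU⟩ := hP.2 (X ⨯ Y)
  obtain ⟨u, hu1, hu2⟩ := h.lift hU (cU ≫ prod.fst) (cU ≫ prod.snd)
  have : u ≫ prod.lift p q = cU := by
    apply Limits.prod.hom_ext
    · simpa using hu1
    · simpa using hu2
  exact regEpi_of_comp hE.factor (by rwa [this])

/-- `pres` plus a weak product comparison regular epi gives descent of relation-invariant
composites. -/
lemma descend_of_pres (hE : IsExact E) {P : Set E} (hP : IsProjectiveCover P)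
    {V X Y Z1 Z0 T : E} {p : V ⟶ X} {q : V ⟶ Y} {z₁ z₂ : Z1 ⟶ Z0} {e : V ⟶ Z0}
    (hwp : RegEpi (prod.lift p q)) (hpres : PreservesProjWP P p q z₁ z₂ e)
    (h : Z0 ⟶ T) (hz : z₁ ≫ h = z₂ ≫ h) :
    ∃ l : X ⨯ Y ⟶ T, prod.lift p q ≫ l = e ≫ h := by
  obtain ⟨V1, v₁, v₂, heq⟩ := exists_isEqualityFor hP (prod.lift p q) hwp
  obtain ⟨t, ht1, ht2⟩ := hpres v₁ v₂ heq
  have hcoeq : v₁ ≫ e ≫ h = v₂ ≫ e ≫ h := by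
    rw [← Category.assoc, ← ht1, ← Category.assoc, ← ht2]
    simp only [Category.assoc, hz]
  exact regEpi_desc_of_cover hwp v₁ v₂ heq.w heq.cover.epi (e ≫ h) hcoeq

/-- Factorisation through a mono descends along regular epis. -/
lemma factor_through_mono_of_regEpi {T' T J M : E} {u : T' ⟶ T} (hu : RegEpi u) (τ : T ⟶ J)
    {m : M ⟶ J} (hm : Mono m) (σ : T' ⟶ M) (hσ : σ ≫ m = u ≫ τ) :
    ∃ δ : T ⟶ M, δ ≫ m = τ := by
  obtain ⟨⟨R, a, b, w, colim⟩⟩ := hu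
  haveI : Epi u := (regEpi_of_isColimit colim).epi
  have hab : a ≫ σ = b ≫ σ := by
    rw [← cancel_mono m]
    simp only [Category.assoc, hσ]
    rw [← Category.assoc, ← Category.assoc, w]
  refine ⟨Cofork.IsColimit.desc colim σ hab, ?_⟩
  rw [← cancel_epi u, ← Category.assoc, cofork_π_desc colim σ hab, hσ]

end KernelPairs

section Forward
variable {E : Type u} [Category.{v} E] [HasFiniteLimits E]

lemma hasGWSP_of_cartesianClosed (hE : IsExact E) (P : Set E) (hP : IsProjectiveCover P)
    (hCC : CartesianClosedP E) : HasGWSP P := by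
  intro Y1 Y0 J Xp hY1 hY0 hJ hXp y₁ y₂ hper f g hf hg
  -- quotient of the pseudo equivalence relation
  obtain ⟨R0, eh, mR, heh, hmR, hehm, hrel⟩ := hper
  obtain ⟨Q, quo, hrq, ⟨hcolim⟩, hkp⟩ := hE.effective (mR ≫ prod.fst) (mR ≫ prod.snd) hrel
  have hquo : RegEpi quo := regEpi_of_isColimit hcolim
  have hy₁ : eh ≫ mR ≫ prod.fst = y₁ := by rw [← Category.assoc, hehm]; simp
  have hy₂ : eh ≫ mR ≫ prod.snd = y₂ := by rw [← Category.assoc, hehm]; simp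
  haveI hehe : Epi eh := heh.epi
  -- f and g descend to the quotient
  have hrf : (mR ≫ prod.fst) ≫ f = (mR ≫ prod.snd) ≫ f := by
    rw [← cancel_epi eh]
    simp only [← Category.assoc]
    simp only [Category.assoc, hy₁, hy₂, hf]
  have hrg : (mR ≫ prod.fst) ≫ g = (mR ≫ prod.snd) ≫ g := by
    rw [← cancel_epi eh]
    simp only [← Category.assoc]
    simp only [Category.assoc, hy₁, hy₂, hg]
  set fbar := Cofork.IsColimit.desc hcolim f hrf with hfbar_def
  set gbar := Cofork.IsColimit.desc hcolim g hrg with hgbar_def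
  have hfbar : quo ≫ fbar = f := cofork_π_desc hcolim f hrf
  have hgbar : quo ≫ gbar = g := cofork_π_desc hcolim g hrg
  have hyq : y₁ ≫ quo = y₂ ≫ quo := by
    rw [← hy₁, ← hy₂]
    simp only [Category.assoc, hrq]
  -- the adjunction
  obtain ⟨R, ⟨adj⟩⟩ := (hCC Xp).exists_rightAdjoint
  -- `S`, the object of sections
  set Φ : J ⨯ R.obj Q ⟶ R.obj Xp ⨯ R.obj J :=
    prod.lift (prod.snd ≫ R.map gbar) (prod.snd ≫ R.map fbar) with hPhi_def
  set Ψ : J ⨯ R.obj Q ⟶ R.obj Xp ⨯ R.obj J :=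
    prod.lift (terminal.from _ ≫ (adj.homEquiv (⊤_ E) Xp) prod.snd)
      (prod.fst ≫ (adj.homEquiv J J) prod.fst) with hPsi_def
  -- the key unpacking equivalence
  have condS : ∀ {T : E} (t : T ⟶ J) (σ : T ⟶ R.obj Q),
      (prod.lift t σ ≫ Φ = prod.lift t σ ≫ Ψ) ↔
      ((adj.homEquiv T Q).symm σ ≫ gbar = prod.snd ∧
       (adj.homEquiv T Q).symm σ ≫ fbar = prod.fst ≫ t) := by
    intro T t σ
    have lhs1 : prod.lift t σ ≫ Φ ≫ prod.fst
        = adj.homEquiv T Xp ((adj.homEquiv T Q).symm σ ≫ gbar) := by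
      rw [hPhi_def, prod.lift_fst, ← Category.assoc, prod.lift_snd,
        adj.homEquiv_naturality_right, Equiv.apply_symm_apply]
    have lhs2 : prod.lift t σ ≫ Φ ≫ prod.snd
        = adj.homEquiv T J ((adj.homEquiv T Q).symm σ ≫ fbar) := by
      rw [hPhi_def, prod.lift_snd, ← Category.assoc, prod.lift_snd,
        adj.homEquiv_naturality_right, Equiv.apply_symm_apply]
    have rhs1 : prod.lift t σ ≫ Ψ ≫ prod.fst = adj.homEquiv T Xp prod.snd := by
      rw [hPsi_def, prod.lift_fst, ← Category.assoc]
      have h0 : prod.lift t σ ≫ terminal.from (J ⨯ R.obj Q) = terminal.from T := by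
        apply Subsingleton.elim
      rw [h0]; erw [← adj.homEquiv_naturality_left]
      congr 1
      show prod.map (terminal.from T) (𝟙 Xp) ≫ prod.snd = prod.snd
      simp
    have rhs2 : prod.lift t σ ≫ Ψ ≫ prod.snd = adj.homEquiv T J (prod.fst ≫ t) := by
      rw [hPsi_def, prod.lift_snd, ← Category.assoc, prod.lift_fst]
      erw [← adj.homEquiv_naturality_left]
      congr 1
      show prod.map t (𝟙 Xp) ≫ prod.fst = prod.fst ≫ t
      simp
    constructor
    · intro h
      have h1 : prod.lift t σ ≫ Φ ≫ prod.fst = prod.lift t σ ≫ Ψ ≫ prod.fst := by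
        rw [← Category.assoc, h, Category.assoc]
      have h2 : prod.lift t σ ≫ Φ ≫ prod.snd = prod.lift t σ ≫ Ψ ≫ prod.snd := by
        rw [← Category.assoc, h, Category.assoc]
      rw [lhs1, rhs1] at h1
      rw [lhs2, rhs2] at h2
      exact ⟨(adj.homEquiv T Xp).injective h1, (adj.homEquiv T J).injective h2⟩
    · rintro ⟨h1, h2⟩
      apply Limits.prod.hom_ext
      · rw [Category.assoc, Category.assoc, lhs1, rhs1, h1]
      · rw [Category.assoc, Category.assoc, lhs2, rhs2, h2]; rfl
  -- cover of S
  obtain ⟨W, hW, cW, hcW⟩ := hP.2 (equalizer Φ Ψ)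
  set sJ : equalizer Φ Ψ ⟶ J := equalizer.ι Φ Ψ ≫ prod.fst with hsJ_def
  set sQ : equalizer Φ Ψ ⟶ R.obj Q := equalizer.ι Φ Ψ ≫ prod.snd with hsQ_def
  set w : W ⟶ J := cW ≫ sJ with hw_def
  set uW : (prod.functor.flip.obj Xp).obj W ⟶ Q := (adj.homEquiv W Q).symm (cW ≫ sQ)
    with huW_def
  have huW : uW ≫ gbar = prod.snd ∧ uW ≫ fbar = prod.fst ≫ w := by
    have hc : prod.lift w (cW ≫ sQ) ≫ Φ = prod.lift w (cW ≫ sQ) ≫ Ψ := by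
      have hl : prod.lift w (cW ≫ sQ) = cW ≫ equalizer.ι Φ Ψ := by
        apply Limits.prod.hom_ext <;> simp [hw_def, hsJ_def, hsQ_def]
      rw [hl, Category.assoc, equalizer.condition, Category.assoc]
    exact (condS w (cW ≫ sQ)).1 hc
  -- the weak product V over W ⨯ Xp
  set uW' : W ⨯ Xp ⟶ Q := uW with huW'_def
  obtain ⟨V, hV, cV, hcV⟩ := hP.2 (pullback quo uW')
  set cc : V ⟶ W ⨯ Xp := cV ≫ pullback.snd quo uW' with hcc_def
  have hccP : RegEpi cc := by
    exact regEpi_comp hE.factor hcV (hE.stable quo uW' hquo)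
  set p : V ⟶ W := cc ≫ prod.fst with hp_def
  set q : V ⟶ Xp := cc ≫ prod.snd with hq_def
  set e : V ⟶ Y0 := cV ≫ pullback.fst quo uW' with he_def
  have hlift_pq : prod.lift p q = cc := by
    apply Limits.prod.hom_ext <;> simp [hp_def, hq_def]
  have hequo : e ≫ quo = cc ≫ uW' := by
    simp only [he_def, hcc_def, Category.assoc, pullback.condition]
  refine ⟨W, V, w, p, q, e, ?_, ?_⟩
  · -- the cone
    refine ⟨hW, ?_, ?_, ?_, ?_⟩
    · have := isWeakProduct_of_cover hP hV hccP
      · exact this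
    · -- preservation of projections
      intro V1 v₁ v₂ heq
      have hkey : v₁ ≫ e ≫ quo = v₂ ≫ e ≫ quo := by
        rw [hequo, ← hlift_pq]
        rw [← Category.assoc, ← Category.assoc, heq.w]
      set ρ := hkp.lift (v₁ ≫ e) (v₂ ≫ e) (by simpa using hkey) with hρ_def
      obtain ⟨t, ht⟩ := hP.1 V1 heq.mem eh heh ρ
      refine ⟨t, ?_, ?_⟩
      · rw [← hy₁, ← Category.assoc, ht, hρ_def]
        exact hkp.lift_fst _ _ _
      · rw [← hy₂, ← Category.assoc, ht, hρ_def]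
        exact hkp.lift_snd _ _ _
    · -- comm₁
      have : e ≫ f = p ≫ w := by
        rw [← hfbar, ← Category.assoc e quo fbar, hequo, Category.assoc]
        exact (congrArg (cc ≫ ·) huW.2).trans (by rw [← Category.assoc, ← hp_def])
      exact this.symm
    · -- comm₂
      rw [← hgbar, ← Category.assoc e quo gbar, hequo, Category.assoc]
      exact hq_def.trans (congrArg (cc ≫ ·) huW.1.symm)
  · -- weak terminality
    intro W' V' w' p' q' e' hcone
    have hc' : RegEpi (prod.lift p' q') := regEpi_lift_of_isWeakProduct hE hP hcone.wp
    obtain ⟨ubar, hubar⟩ := descend_of_pres hE hP hc' hcone.pres quo hyq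
    haveI : Epi (prod.lift p' q') := hc'.epi
    have hubarg : ubar ≫ gbar = prod.snd := by
      rw [← cancel_epi (prod.lift p' q'), ← Category.assoc, hubar, Category.assoc, hgbar,
        ← hcone.comm₂]
      simp
    have hubarf : ubar ≫ fbar = prod.fst ≫ w' := by
      rw [← cancel_epi (prod.lift p' q'), ← Category.assoc, hubar, Category.assoc, hfbar,
        ← hcone.comm₁]
      simp only [← Category.assoc, prod.lift_fst]
    set σQ : W' ⟶ R.obj Q := adj.homEquiv W' Q ubar with hσQ_def
    have hσQs : (adj.homEquiv W' Q).symm σQ = ubar := Equiv.symm_apply_apply _ _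
    have hcnd : prod.lift w' σQ ≫ Φ = prod.lift w' σQ ≫ Ψ := by
      rw [condS w' σQ, hσQs]
      exact ⟨hubarg, hubarf⟩
    set sLift : W' ⟶ equalizer Φ Ψ := equalizer.lift (prod.lift w' σQ) hcnd with hsLift_def
    obtain ⟨α, hα⟩ := hP.1 W' hcone.memW cW hcW sLift
    have hαw : α ≫ w = w' := by
      rw [hw_def, ← Category.assoc, hα, hsLift_def, hsJ_def, ← Category.assoc,
        equalizer.lift_ι]
      simp
    have hαsQ : α ≫ cW ≫ sQ = σQ := by
      rw [← Category.assoc, hα, hsLift_def, hsQ_def, ← Category.assoc, equalizer.lift_ι]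
      simp
    have hkey2 : prod.lift (p' ≫ α) q' ≫ uW' = e' ≫ quo := by
      have hmapα : prod.map α (𝟙 Xp) ≫ uW' = ubar := by
        have := adj.homEquiv_naturality_left_symm (G := R) α (cW ≫ sQ)
        rw [hαsQ, hσQs] at this
        exact this.symm
      have hsplit : prod.lift (p' ≫ α) q' = prod.lift p' q' ≫ prod.map α (𝟙 Xp) := by
        apply Limits.prod.hom_ext <;> simp
      rw [hsplit, Category.assoc, hmapα, hubar]
    obtain ⟨β, hβ⟩ := hP.1 V' hcone.wp.mem cV hcV
      (pullback.lift e' (prod.lift (p' ≫ α) q') hkey2.symm)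
    refine ⟨α, β, hαw, ?_, ?_, ?_⟩
    · calc β ≫ p = ((β ≫ cV) ≫ pullback.snd quo uW') ≫ prod.fst := by
            rw [hp_def, hcc_def]; simp only [Category.assoc]
      _ = prod.lift (p' ≫ α) q' ≫ prod.fst := by rw [hβ, pullback.lift_snd]
      _ = p' ≫ α := by simp
    · calc β ≫ q = ((β ≫ cV) ≫ pullback.snd quo uW') ≫ prod.snd := by
            rw [hq_def, hcc_def]; simp only [Category.assoc]
      _ = prod.lift (p' ≫ α) q' ≫ prod.snd := by rw [hβ, pullback.lift_snd]
      _ = q' := by simp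
    · calc β ≫ e = (β ≫ cV) ≫ pullback.fst quo uW' := by
            rw [he_def]; simp only [Category.assoc]
      _ = e' := by rw [hβ, pullback.lift_fst]

end Forward

section ForallLemma
variable {E : Type u} [Category.{v} E] [HasFiniteLimits E]

/-- The universal quantification of a subobject of `J ⨯ X` along the projection to `J`,
constructed from generalised weak simple products. -/
lemma forall_subobject (hE : IsExact E) {P : Set E} (hP : IsProjectiveCover P)
    (hG : HasGWSP P) {J X S : E} (m : S ⟶ J ⨯ X) (hm : Mono m) :
    ∃ (A : E) (a : A ⟶ J), Mono a ∧
      ∀ (T : E) (τ : T ⟶ J), (∃ s : T ⟶ A, s ≫ a = τ) ↔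
        (∃ k : T ⨯ X ⟶ S, k ≫ m = prod.map τ (𝟙 X)) := by
  obtain ⟨J0, hJ0, bJ, hbJ⟩ := hP.2 J
  obtain ⟨X0, hX0, bX, hbX⟩ := hP.2 X
  obtain ⟨Y0, hY0, c0, hc0⟩ := hP.2 (pullback m (prod.map bJ bX))
  obtain ⟨μ, hμ_def⟩ : ∃ t, t = c0 ≫ pullback.snd m (prod.map bJ bX) := ⟨_, rfl⟩
  obtain ⟨πJ, hπJ_def⟩ : ∃ t, t = μ ≫ (prod.fst : J0 ⨯ X0 ⟶ J0) := ⟨_, rfl⟩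
  obtain ⟨πX, hπX_def⟩ : ∃ t, t = μ ≫ (prod.snd : J0 ⨯ X0 ⟶ X0) := ⟨_, rfl⟩
  obtain ⟨Y1, hY1, k1, hk1⟩ := hP.2 (pullback μ μ)
  obtain ⟨y₁, hy₁_def⟩ : ∃ t, t = k1 ≫ pullback.fst μ μ := ⟨_, rfl⟩
  obtain ⟨y₂, hy₂_def⟩ : ∃ t, t = k1 ≫ pullback.snd μ μ := ⟨_, rfl⟩
  have hμμ : y₁ ≫ μ = y₂ ≫ μ := by
    rw [hy₁_def, hy₂_def, Category.assoc, Category.assoc, pullback.condition]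
  have hyJ : y₁ ≫ πJ = y₂ ≫ πJ := by
    rw [hπJ_def, ← Category.assoc y₁ μ, ← Category.assoc y₂ μ, hμμ]
  have hyX : y₁ ≫ πX = y₂ ≫ πX := by
    rw [hπX_def, ← Category.assoc y₁ μ, ← Category.assoc y₂ μ, hμμ]
  have hper : IsPseudoEquivRel y₁ y₂ := by
    rw [hy₁_def, hy₂_def]; exact isPseudoEquivRel_of_cover μ hk1
  obtain ⟨W, V, w, p, q, e, hgwsp⟩ := hG hY1 hY0 hJ0 hX0 y₁ y₂ hper πJ πX hyJ hyX
  obtain ⟨I, eI, mI, heI, hmI, heIm⟩ := hE.factor (w ≫ bJ)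
  have hcc : RegEpi (prod.lift p q) := regEpi_lift_of_isWeakProduct hE hP hgwsp.cone.wp
  haveI : Epi (prod.lift p q) := hcc.epi
  -- descend `e ≫ c0 ≫ pullback.fst` along the weak product comparison
  have hyh : y₁ ≫ c0 ≫ pullback.fst m (prod.map bJ bX)
      = y₂ ≫ c0 ≫ pullback.fst m (prod.map bJ bX) := by
    rw [← cancel_mono m]
    simp only [Category.assoc, pullback.condition]
    rw [← Category.assoc c0, ← hμ_def, ← Category.assoc y₁ μ, ← Category.assoc y₂ μ, hμμ]
  obtain ⟨ω, hω⟩ := descend_of_pres hE hP hcc hgwsp.cone.pres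
    (c0 ≫ pullback.fst m (prod.map bJ bX)) hyh
  have heμ : e ≫ μ = prod.lift p q ≫ prod.map w (𝟙 X0) := by
    apply Limits.prod.hom_ext
    · rw [Category.assoc, Category.assoc, prod.map_fst, ← hπJ_def, ← hgwsp.cone.comm₁,
        ← Category.assoc, prod.lift_fst]
    · rw [Category.assoc, Category.assoc, prod.map_snd, ← hπX_def, ← hgwsp.cone.comm₂,
        ← Category.assoc, prod.lift_snd, Category.comp_id]
  have hωm : ω ≫ m = prod.map (w ≫ bJ) bX := by
    rw [← cancel_epi (prod.lift p q), ← Category.assoc, hω]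
    have h1 : (e ≫ c0 ≫ pullback.fst m (prod.map bJ bX)) ≫ m
        = (e ≫ μ) ≫ prod.map bJ bX := by
      simp only [Category.assoc, pullback.condition]
      rw [hμ_def]
      simp only [Category.assoc]
    rw [h1, heμ]
    simp only [Category.assoc, prod.map_map, Category.comp_id, Category.id_comp]
  -- descend ω to I ⨯ X
  have hmap : RegEpi (prod.map eI bX) := regEpi_prodMap hE heI hbX
  have hsplit : prod.map (w ≫ bJ) bX = prod.map eI bX ≫ prod.map mI (𝟙 X) := by
    rw [prod.map_map, ← heIm, Category.comp_id]
  have hcoeq : pullback.fst (prod.map eI bX) (prod.map eI bX) ≫ ω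
      = pullback.snd (prod.map eI bX) (prod.map eI bX) ≫ ω := by
    rw [← cancel_mono m]
    simp only [Category.assoc, hωm]
    rw [hsplit, ← Category.assoc, ← Category.assoc, pullback.condition]
  obtain ⟨κ, hκ⟩ := regEpi_desc hmap ω hcoeq
  haveI : Epi (prod.map eI bX) := hmap.epi
  have hκm : κ ≫ m = prod.map mI (𝟙 X) := by
    rw [← cancel_epi (prod.map eI bX), ← Category.assoc, hκ, hωm, hsplit]
  refine ⟨I, mI, hmI, ?_⟩
  intro T τ
  constructor
  · rintro ⟨s, hs⟩
    exact ⟨prod.map s (𝟙 X) ≫ κ, by rw [Category.assoc, hκm, prod.map_map, hs]; simp⟩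
  · rintro ⟨k, hk⟩
    obtain ⟨Th, hTh, cT, hcT⟩ := hP.2 T
    obtain ⟨w', hw'⟩ := hP.1 Th hTh bJ hbJ (cT ≫ τ)
    obtain ⟨V', hV', cV', hcV'⟩ := hP.2 (Th ⨯ X0)
    obtain ⟨p', hp'_def⟩ : ∃ t, t = cV' ≫ (prod.fst : Th ⨯ X0 ⟶ Th) := ⟨_, rfl⟩
    obtain ⟨q', hq'_def⟩ : ∃ t, t = cV' ≫ (prod.snd : Th ⨯ X0 ⟶ X0) := ⟨_, rfl⟩
    have hφc : (prod.lift (p' ≫ cT) (q' ≫ bX) ≫ k) ≫ m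
        = prod.lift (p' ≫ w') q' ≫ prod.map bJ bX := by
      rw [Category.assoc, hk]
      apply Limits.prod.hom_ext
      · simp only [Category.assoc, prod.map_fst, prod.lift_fst_assoc, prod.lift_fst]
        rw [hw']
      · simp only [Category.assoc, prod.map_snd, prod.lift_snd_assoc, prod.lift_snd]
        simp
    obtain ⟨e', he'⟩ := hP.1 V' hV' c0 hc0
      (pullback.lift (prod.lift (p' ≫ cT) (q' ≫ bX) ≫ k) (prod.lift (p' ≫ w') q') hφc)
    have he'μ : e' ≫ μ = prod.lift (p' ≫ w') q' := by
      rw [hμ_def, ← Category.assoc, he', pullback.lift_snd]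
    have hcone : GWSPCone P y₁ y₂ πJ πX Th V' w' p' q' e' := by
      refine ⟨hTh, ?_, ?_, ?_, ?_⟩
      · rw [hp'_def, hq'_def]
        exact isWeakProduct_of_cover hP hV' hcV'
      · intro V1 v₁ v₂ heq
        have hsplit' : prod.lift (p' ≫ w') q' = prod.lift p' q' ≫ prod.map w' (𝟙 X0) := by
          apply Limits.prod.hom_ext <;> simp
        have hvv : v₁ ≫ e' ≫ μ = v₂ ≫ e' ≫ μ := by
          rw [he'μ, hsplit', ← Category.assoc, ← Category.assoc, heq.w]
        obtain ⟨t, ht⟩ := hP.1 V1 heq.mem k1 hk1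
          (pullback.lift (v₁ ≫ e') (v₂ ≫ e') (by simpa using hvv))
        refine ⟨t, ?_, ?_⟩
        · rw [hy₁_def, ← Category.assoc, ht, pullback.lift_fst]
        · rw [hy₂_def, ← Category.assoc, ht, pullback.lift_snd]
      · rw [hπJ_def, ← Category.assoc, he'μ, prod.lift_fst]
      · rw [hπX_def, ← Category.assoc, he'μ, prod.lift_snd]
    obtain ⟨α, β, hαw, -, -, -⟩ := hgwsp.lift w' p' q' e' hcone
    have hfac : (α ≫ eI) ≫ mI = cT ≫ τ := by
      rw [Category.assoc, heIm, ← Category.assoc, hαw, hw']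
    exact factor_through_mono_of_regEpi hcT τ hmI (α ≫ eI) hfac

end ForallLemma

section QuasiExp
variable {E : Type u} [Category.{v} E] [HasFiniteLimits E]

lemma regEpi_id (A : E) : RegEpi (𝟙 A) := by
  refine ⟨⟨A, 𝟙 A, 𝟙 A, rfl, ?_⟩⟩
  refine Cofork.IsColimit.mk _ (fun s => s.π) (fun s => by simp) (fun s m hm => by simpa using hm)

/-- A quasi exponential over a projective cover of `X`. -/
lemma quasi_exponential (hE : IsExact E) {P : Set E} (hP : IsProjectiveCover P)
    (hG : HasGWSP P) (X B : E) :
    ∃ (X0 : E) (_ : X0 ∈ P) (bX : X0 ⟶ X) (_ : RegEpi bX) (W : E) (ev0 : W ⨯ X0 ⟶ B),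
      ∀ (Z : E), Z ∈ P → ∀ d : Z ⨯ X ⟶ B, ∃ g : Z ⟶ W,
        prod.map g (𝟙 X0) ≫ ev0 = prod.map (𝟙 Z) bX ≫ d := by
  obtain ⟨X0, hX0, bX, hbX⟩ := hP.2 X
  obtain ⟨B0, hB0, bB, hbB⟩ := hP.2 B
  obtain ⟨One, hOne, t1, ht1⟩ := hP.2 (⊤_ E)
  obtain ⟨Y0, hY0, c0, hc0⟩ := hP.2 (X0 ⨯ (B0 ⨯ One))
  obtain ⟨μ, hμ_def⟩ : ∃ t, t = c0 ≫ prod.map (𝟙 X0) (prod.map bB (𝟙 One)) := ⟨_, rfl⟩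
  have hμreg : RegEpi μ := by
    rw [hμ_def]
    exact regEpi_comp hE.factor hc0
      (regEpi_prodMap hE (regEpi_id X0) (regEpi_prodMap hE hbB (regEpi_id One)))
  obtain ⟨πX, hπX_def⟩ : ∃ t, t = μ ≫ (prod.fst : X0 ⨯ (B ⨯ One) ⟶ X0) := ⟨_, rfl⟩
  obtain ⟨πB, hπB_def⟩ : ∃ t, t = μ ≫ (prod.snd : X0 ⨯ (B ⨯ One) ⟶ B ⨯ One) ≫ prod.fst :=
    ⟨_, rfl⟩
  obtain ⟨fY, hfY_def⟩ : ∃ t, t = μ ≫ (prod.snd : X0 ⨯ (B ⨯ One) ⟶ B ⨯ One) ≫ prod.snd :=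
    ⟨_, rfl⟩
  obtain ⟨Y1, hY1, k1, hk1⟩ := hP.2 (pullback μ μ)
  obtain ⟨y₁, hy₁_def⟩ : ∃ t, t = k1 ≫ pullback.fst μ μ := ⟨_, rfl⟩
  obtain ⟨y₂, hy₂_def⟩ : ∃ t, t = k1 ≫ pullback.snd μ μ := ⟨_, rfl⟩
  have hμμ : y₁ ≫ μ = y₂ ≫ μ := by
    rw [hy₁_def, hy₂_def, Category.assoc, Category.assoc, pullback.condition]
  have hyX : y₁ ≫ πX = y₂ ≫ πX := by
    rw [hπX_def, ← Category.assoc y₁ μ, ← Category.assoc y₂ μ, hμμ]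
  have hyB : y₁ ≫ πB = y₂ ≫ πB := by
    rw [hπB_def, ← Category.assoc y₁ μ, ← Category.assoc y₂ μ, hμμ]
  have hyF : y₁ ≫ fY = y₂ ≫ fY := by
    rw [hfY_def, ← Category.assoc y₁ μ, ← Category.assoc y₂ μ, hμμ]
  have hper : IsPseudoEquivRel y₁ y₂ := by
    rw [hy₁_def, hy₂_def]; exact isPseudoEquivRel_of_cover μ hk1
  obtain ⟨W, V, w, p, q, e, hgwsp⟩ := hG hY1 hY0 hOne hX0 y₁ y₂ hper fY πX hyF hyX
  have hcc : RegEpi (prod.lift p q) := regEpi_lift_of_isWeakProduct hE hP hgwsp.cone.wp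
  obtain ⟨ev0, hev0⟩ := descend_of_pres hE hP hcc hgwsp.cone.pres πB hyB
  refine ⟨X0, hX0, bX, hbX, W, ev0, ?_⟩
  intro Z hZ d
  obtain ⟨w', hw'⟩ := hP.1 Z hZ t1 ht1 (terminal.from Z)
  obtain ⟨V', hV', cV', hcV'⟩ := hP.2 (Z ⨯ X0)
  obtain ⟨p', hp'_def⟩ : ∃ t, t = cV' ≫ (prod.fst : Z ⨯ X0 ⟶ Z) := ⟨_, rfl⟩
  obtain ⟨q', hq'_def⟩ : ∃ t, t = cV' ≫ (prod.snd : Z ⨯ X0 ⟶ X0) := ⟨_, rfl⟩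
  have hlift' : prod.lift p' q' = cV' := by
    apply Limits.prod.hom_ext
    · rw [prod.lift_fst, hp'_def]
    · rw [prod.lift_snd, hq'_def]
  have hlift'reg : RegEpi (prod.lift p' q') := by rw [hlift']; exact hcV'
  haveI : Epi (prod.lift p' q') := hlift'reg.epi
  -- the target of the tentative evaluation
  obtain ⟨Θ, hΘ_def⟩ : ∃ t, t = prod.lift (prod.snd : Z ⨯ X0 ⟶ X0)
      (prod.lift (prod.map (𝟙 Z) bX ≫ d) (prod.fst ≫ w')) := ⟨_, rfl⟩
  obtain ⟨e', he'⟩ := hP.1 V' hV' μ hμreg (prod.lift p' q' ≫ Θ)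
  have hcone : GWSPCone P y₁ y₂ fY πX Z V' w' p' q' e' := by
    refine ⟨hZ, ?_, ?_, ?_, ?_⟩
    · rw [hp'_def, hq'_def]
      exact isWeakProduct_of_cover hP hV' hcV'
    · intro V1 v₁ v₂ heq
      have hvv : v₁ ≫ e' ≫ μ = v₂ ≫ e' ≫ μ := by
        rw [he', ← Category.assoc, ← Category.assoc, heq.w]
      obtain ⟨t, ht⟩ := hP.1 V1 heq.mem k1 hk1
        (pullback.lift (v₁ ≫ e') (v₂ ≫ e') (by simpa using hvv))
      refine ⟨t, ?_, ?_⟩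
      · rw [hy₁_def, ← Category.assoc, ht, pullback.lift_fst]
      · rw [hy₂_def, ← Category.assoc, ht, pullback.lift_snd]
    · rw [hfY_def, ← Category.assoc, he', hΘ_def]
      simp only [Category.assoc, prod.lift_snd_assoc, prod.lift_snd, prod.lift_fst,
        prod.lift_fst_assoc]
    · rw [hπX_def, ← Category.assoc, he', hΘ_def]
      simp only [Category.assoc, prod.lift_fst_assoc, prod.lift_fst, prod.lift_snd,
        prod.lift_snd_assoc]
  obtain ⟨α, β, hαw, hβp, hβq, hβe⟩ := hgwsp.lift w' p' q' e' hcone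
  refine ⟨α, ?_⟩
  rw [← cancel_epi (prod.lift p' q')]
  have hL : prod.lift p' q' ≫ prod.map α (𝟙 X0) ≫ ev0 = e' ≫ πB := by
    rw [← Category.assoc, prod.lift_map, Category.comp_id, ← hβp, ← hβq,
      show prod.lift (β ≫ p) (β ≫ q) = β ≫ prod.lift p q by
        apply Limits.prod.hom_ext <;> simp,
      Category.assoc, hev0, ← Category.assoc, hβe]
  have hR : prod.lift p' q' ≫ prod.map (𝟙 Z) bX ≫ d = e' ≫ πB := by
    rw [hπB_def, ← Category.assoc e' μ, he', hΘ_def]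
    simp only [Category.assoc, prod.lift_snd_assoc, prod.lift_fst, prod.lift_snd,
      prod.lift_fst_assoc]
  rw [hL, hR]

end QuasiExp

section Exponential
variable {E : Type u} [Category.{v} E] [HasFiniteLimits E]

lemma prodMap_comp_left {A A' A'' Y Z : E} (x : A ⟶ A') (y : A' ⟶ A'') (h : A'' ⨯ Y ⟶ Z) :
    prod.map (x ≫ y) (𝟙 Y) ≫ h = prod.map x (𝟙 Y) ≫ prod.map y (𝟙 Y) ≫ h := by
  rw [← Category.assoc, prod.map_map, Category.comp_id]

lemma point_eval {T A Y Z : E} {a b : T ⟶ A} {e : A ⨯ Y ⟶ Z}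
    (h : prod.map a (𝟙 Y) ≫ e = prod.map b (𝟙 Y) ≫ e) (x : T ⟶ Y) :
    prod.lift a x ≫ e = prod.lift b x ≫ e := by
  have H := prod.lift (𝟙 T) x ≫= h
  simpa only [← Category.assoc, prod.lift_map, Category.id_comp, Category.comp_id] using H

lemma prodMap_comp_right {A Y Y' Y'' Z : E} (x : Y ⟶ Y') (y : Y' ⟶ Y'') (h : A ⨯ Y'' ⟶ Z) :
    prod.map (𝟙 A) (x ≫ y) ≫ h = prod.map (𝟙 A) x ≫ prod.map (𝟙 A) y ≫ h := by
  rw [← Category.assoc, prod.map_map, Category.comp_id]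

lemma map_id_comm {A A' Y Y' : E} (a : A ⟶ A') (b : Y ⟶ Y') :
    prod.map a (𝟙 Y) ≫ prod.map (𝟙 A') b = prod.map (𝟙 A) b ≫ prod.map a (𝟙 Y') := by
  rw [prod.map_map, prod.map_map]
  simp only [Category.comp_id, Category.id_comp]

set_option maxHeartbeats 1000000 in
/-- From GWSP: every pair of objects has an exponential, given by a strict universal
property. -/
lemma exists_exponential (hE : IsExact E) {P : Set E} (hP : IsProjectiveCover P)
    (hG : HasGWSP P) (X B : E) :
    ∃ (Ex : E) (ev : Ex ⨯ X ⟶ B), ∀ (T : E) (d : T ⨯ X ⟶ B),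
      ∃! h : T ⟶ Ex, prod.map h (𝟙 X) ≫ ev = d := by
  obtain ⟨X0, hX0, bX, hbX, W, ev0, hq⟩ := quasi_exponential hE hP hG X B
  -- the subobject `W' ⊆ W` of functions invariant under the kernel pair of `bX`
  obtain ⟨d1, hd1_def⟩ : ∃ t, t = prod.map (𝟙 W) (pullback.fst bX bX) ≫ ev0 := ⟨_, rfl⟩
  obtain ⟨d2, hd2_def⟩ : ∃ t, t = prod.map (𝟙 W) (pullback.snd bX bX) ≫ ev0 := ⟨_, rfl⟩
  obtain ⟨W', i, hi, hiff_desc⟩ := forall_subobject hE hP hG (equalizer.ι d1 d2)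
    inferInstance
  have descIff : ∀ (T : E) (τ : T ⟶ W), (∃ s : T ⟶ W', s ≫ i = τ) ↔
      (prod.map τ (𝟙 (pullback bX bX)) ≫ d1 = prod.map τ (𝟙 (pullback bX bX)) ≫ d2) := by
    intro T τ
    rw [hiff_desc T τ]
    constructor
    · rintro ⟨k, hk⟩
      rw [← hk, Category.assoc, Category.assoc, equalizer.condition]
    · intro h
      exact ⟨equalizer.lift _ h, equalizer.lift_ι _ _⟩
  -- pointwise form of membership in `W'`
  have descEval : ∀ (T : E) (τ : T ⟶ W) (x₁ x₂ : T ⟶ X0) (hx : x₁ ≫ bX = x₂ ≫ bX),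
      (∃ s : T ⟶ W', s ≫ i = τ) → prod.lift τ x₁ ≫ ev0 = prod.lift τ x₂ ≫ ev0 := by
    intro T τ x₁ x₂ hx hs
    have h := (descIff T τ).mp hs
    have H := prod.lift (𝟙 T) (pullback.lift x₁ x₂ hx) ≫= h
    simpa only [hd1_def, hd2_def, ← Category.assoc, prod.lift_map, Category.id_comp,
      Category.comp_id, pullback.lift_fst, pullback.lift_snd] using H
  -- the relation `Rel ⊆ W ⨯ W` of extensional equality
  obtain ⟨e1, he1_def⟩ : ∃ t, t = prod.map (prod.fst : W ⨯ W ⟶ W) (𝟙 X0) ≫ ev0 := ⟨_, rfl⟩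
  obtain ⟨e2, he2_def⟩ : ∃ t, t = prod.map (prod.snd : W ⨯ W ⟶ W) (𝟙 X0) ≫ ev0 := ⟨_, rfl⟩
  obtain ⟨Rel, r, hr, hiff_rel⟩ := forall_subobject hE hP hG (equalizer.ι e1 e2)
    inferInstance
  have relIff : ∀ (T : E) (a b : T ⟶ W), (∃ s : T ⟶ Rel, s ≫ r = prod.lift a b) ↔
      (prod.map a (𝟙 X0) ≫ ev0 = prod.map b (𝟙 X0) ≫ ev0) := by
    intro T a b
    rw [hiff_rel T (prod.lift a b)]
    have hc1 : prod.map (prod.lift a b) (𝟙 X0) ≫ e1 = prod.map a (𝟙 X0) ≫ ev0 := by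
      rw [he1_def, ← Category.assoc, prod.map_map, prod.lift_fst, Category.comp_id]
    have hc2 : prod.map (prod.lift a b) (𝟙 X0) ≫ e2 = prod.map b (𝟙 X0) ≫ ev0 := by
      rw [he2_def, ← Category.assoc, prod.map_map, prod.lift_snd, Category.comp_id]
    constructor
    · rintro ⟨k, hk⟩
      rw [← hc1, ← hc2, ← hk, Category.assoc, Category.assoc, equalizer.condition]
    · intro h
      exact ⟨equalizer.lift _ (by rw [hc1, hc2, h]), equalizer.lift_ι _ _⟩
  -- restrict the relation to `W'`
  haveI := hr
  obtain ⟨snd', hsnd'_def⟩ : ∃ t, t = pullback.snd r (prod.map i i) := ⟨_, rfl⟩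
  haveI hsnd'mono : Mono snd' := by rw [hsnd'_def]; exact inferInstance
  obtain ⟨ρ₁, hρ₁_def⟩ : ∃ t, t = snd' ≫ (prod.fst : W' ⨯ W' ⟶ W') := ⟨_, rfl⟩
  obtain ⟨ρ₂, hρ₂_def⟩ : ∃ t, t = snd' ≫ (prod.snd : W' ⨯ W' ⟶ W') := ⟨_, rfl⟩
  have hsnd'lift : prod.lift ρ₁ ρ₂ = snd' := by
    apply Limits.prod.hom_ext
    · rw [prod.lift_fst, hρ₁_def]
    · rw [prod.lift_snd, hρ₂_def]
  have hr' : ∀ (T : E) (a b : T ⟶ W'), (∃ s : T ⟶ pullback r (prod.map i i),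
      s ≫ snd' = prod.lift a b) ↔
      (prod.map (a ≫ i) (𝟙 X0) ≫ ev0 = prod.map (b ≫ i) (𝟙 X0) ≫ ev0) := by
    intro T a b
    constructor
    · rintro ⟨s, hs⟩
      rw [← relIff T (a ≫ i) (b ≫ i)]
      refine ⟨s ≫ pullback.fst r (prod.map i i), ?_⟩
      rw [Category.assoc, pullback.condition, ← Category.assoc, ← hsnd'_def,
        hs, prod.lift_map]
    · intro h
      obtain ⟨s0, hs0⟩ := (relIff T (a ≫ i) (b ≫ i)).mpr h
      have hcomm : s0 ≫ r = prod.lift a b ≫ prod.map i i := by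
        rw [hs0, prod.lift_map]
      refine ⟨pullback.lift s0 (prod.lift a b) hcomm, ?_⟩
      rw [hsnd'_def, pullback.lift_snd]
  have hev_r : prod.map (ρ₁ ≫ i) (𝟙 X0) ≫ ev0 = prod.map (ρ₂ ≫ i) (𝟙 X0) ≫ ev0 := by
    rw [← hr' _ ρ₁ ρ₂]
    exact ⟨𝟙 _, by rw [Category.id_comp, hsnd'lift]⟩
  -- `ρ₁, ρ₂` is an equivalence relation
  have hrel : IsEquivRelPair ρ₁ ρ₂ := by
    constructor
    · intro T h k h1 h2
      rw [← cancel_mono snd', ← hsnd'lift]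
      apply Limits.prod.hom_ext
      · simpa using h1
      · simpa using h2
    · obtain ⟨s, hs⟩ := (hr' W' (𝟙 W') (𝟙 W')).mpr rfl
      exact ⟨s, by rw [hρ₁_def, ← Category.assoc, hs, prod.lift_fst],
        by rw [hρ₂_def, ← Category.assoc, hs, prod.lift_snd]⟩
    · obtain ⟨s, hs⟩ := (hr' _ ρ₂ ρ₁).mpr hev_r.symm
      exact ⟨s, by rw [hρ₁_def, ← Category.assoc, hs, prod.lift_fst],
        by rw [hρ₂_def, ← Category.assoc, hs, prod.lift_snd]⟩
    · intro T pp qq hpq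
      have h1 : prod.map ((pp ≫ ρ₁) ≫ i) (𝟙 X0) ≫ ev0
          = prod.map ((qq ≫ ρ₂) ≫ i) (𝟙 X0) ≫ ev0 := by
        calc prod.map ((pp ≫ ρ₁) ≫ i) (𝟙 X0) ≫ ev0
            = prod.map pp (𝟙 X0) ≫ prod.map (ρ₁ ≫ i) (𝟙 X0) ≫ ev0 := by
              rw [← prodMap_comp_left, Category.assoc]
          _ = prod.map pp (𝟙 X0) ≫ prod.map (ρ₂ ≫ i) (𝟙 X0) ≫ ev0 := by rw [hev_r]
          _ = prod.map ((pp ≫ ρ₂) ≫ i) (𝟙 X0) ≫ ev0 := by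
              rw [← prodMap_comp_left, Category.assoc]
          _ = prod.map ((qq ≫ ρ₁) ≫ i) (𝟙 X0) ≫ ev0 := by rw [hpq]
          _ = prod.map qq (𝟙 X0) ≫ prod.map (ρ₁ ≫ i) (𝟙 X0) ≫ ev0 := by
              rw [← prodMap_comp_left, Category.assoc]
          _ = prod.map qq (𝟙 X0) ≫ prod.map (ρ₂ ≫ i) (𝟙 X0) ≫ ev0 := by rw [hev_r]
          _ = prod.map ((qq ≫ ρ₂) ≫ i) (𝟙 X0) ≫ ev0 := by
              rw [← prodMap_comp_left, Category.assoc]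
      obtain ⟨s, hs⟩ := (hr' T (pp ≫ ρ₁) (qq ≫ ρ₂)).mpr h1
      refine ⟨s, ?_, ?_⟩
      · calc s ≫ ρ₁ = (s ≫ snd') ≫ prod.fst := by rw [hρ₁_def, Category.assoc]
          _ = pp ≫ ρ₁ := by rw [hs, prod.lift_fst]
      · calc s ≫ ρ₂ = (s ≫ snd') ≫ prod.snd := by rw [hρ₂_def, Category.assoc]
          _ = qq ≫ ρ₂ := by rw [hs, prod.lift_snd]
  -- the quotient
  obtain ⟨Ex, t, hwt, ⟨hcolim⟩, hkp⟩ := hE.effective ρ₁ ρ₂ hrel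
  have ht : RegEpi t := regEpi_of_isColimit hcolim
  -- the evaluation descends to `Ex ⨯ X`
  have htb : RegEpi (prod.map t bX) := regEpi_prodMap hE ht hbX
  have hcoeq : pullback.fst (prod.map t bX) (prod.map t bX) ≫ prod.map i (𝟙 X0) ≫ ev0
      = pullback.snd (prod.map t bX) (prod.map t bX) ≫ prod.map i (𝟙 X0) ≫ ev0 := by
    obtain ⟨a₁, ha₁⟩ : ∃ s, s = pullback.fst (prod.map t bX) (prod.map t bX) ≫
      (prod.fst : W' ⨯ X0 ⟶ W') := ⟨_, rfl⟩
    obtain ⟨a₂, ha₂⟩ : ∃ s, s = pullback.snd (prod.map t bX) (prod.map t bX) ≫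
      (prod.fst : W' ⨯ X0 ⟶ W') := ⟨_, rfl⟩
    obtain ⟨x₁, hx₁⟩ : ∃ s, s = pullback.fst (prod.map t bX) (prod.map t bX) ≫
      (prod.snd : W' ⨯ X0 ⟶ X0) := ⟨_, rfl⟩
    obtain ⟨x₂, hx₂⟩ : ∃ s, s = pullback.snd (prod.map t bX) (prod.map t bX) ≫
      (prod.snd : W' ⨯ X0 ⟶ X0) := ⟨_, rfl⟩
    have hfst : pullback.fst (prod.map t bX) (prod.map t bX) = prod.lift a₁ x₁ := by
      apply Limits.prod.hom_ext
      · rw [prod.lift_fst, ha₁]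
      · rw [prod.lift_snd, hx₁]
    have hsnd : pullback.snd (prod.map t bX) (prod.map t bX) = prod.lift a₂ x₂ := by
      apply Limits.prod.hom_ext
      · rw [prod.lift_fst, ha₂]
      · rw [prod.lift_snd, hx₂]
    have hcond := pullback.condition (f := prod.map t bX) (g := prod.map t bX)
    rw [hfst, hsnd] at hcond
    have hat : a₁ ≫ t = a₂ ≫ t := by
      have h := hcond =≫ (prod.fst : Ex ⨯ X ⟶ Ex)
      simpa only [Category.assoc, prod.lift_map, prod.lift_fst] using h
    have hxb : x₁ ≫ bX = x₂ ≫ bX := by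
      have h := hcond =≫ (prod.snd : Ex ⨯ X ⟶ X)
      simpa only [Category.assoc, prod.lift_map, prod.lift_snd] using h
    obtain ⟨σ, hσ1, hσ2⟩ : ∃ σ, σ ≫ ρ₁ = a₁ ∧ σ ≫ ρ₂ = a₂ :=
      ⟨hkp.lift a₁ a₂ hat, hkp.lift_fst _ _ _, hkp.lift_snd _ _ _⟩
    have hstar : prod.map (a₁ ≫ i) (𝟙 X0) ≫ ev0 = prod.map (a₂ ≫ i) (𝟙 X0) ≫ ev0 := by
      calc prod.map (a₁ ≫ i) (𝟙 X0) ≫ ev0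
          = prod.map σ (𝟙 X0) ≫ prod.map (ρ₁ ≫ i) (𝟙 X0) ≫ ev0 := by
            rw [← prodMap_comp_left, ← Category.assoc, hσ1]
        _ = prod.map σ (𝟙 X0) ≫ prod.map (ρ₂ ≫ i) (𝟙 X0) ≫ ev0 := by rw [hev_r]
        _ = prod.map (a₂ ≫ i) (𝟙 X0) ≫ ev0 := by
            rw [← prodMap_comp_left, ← Category.assoc, hσ2]
    have hstep1 : prod.lift (a₁ ≫ i) x₁ ≫ ev0 = prod.lift (a₂ ≫ i) x₁ ≫ ev0 :=
      point_eval hstar x₁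
    have hstep2 : prod.lift (a₂ ≫ i) x₁ ≫ ev0 = prod.lift (a₂ ≫ i) x₂ ≫ ev0 :=
      descEval _ (a₂ ≫ i) x₁ x₂ hxb ⟨a₂, rfl⟩
    rw [hfst, hsnd, ← Category.assoc, ← Category.assoc, prod.lift_map, prod.lift_map,
      Category.comp_id, Category.comp_id]
    rw [hstep1, hstep2]
  obtain ⟨ev, hev⟩ := regEpi_desc htb (prod.map i (𝟙 X0) ≫ ev0) hcoeq
  -- the universal property
  refine ⟨Ex, ev, ?_⟩
  intro T d
  obtain ⟨Th, hTh, u, hu⟩ := hP.2 T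
  haveI : Epi u := hu.epi
  obtain ⟨g, hg⟩ := hq Th hTh (prod.map u (𝟙 X) ≫ d)
  -- `g` lands in `W'`
  have hgW' : ∃ s : Th ⟶ W', s ≫ i = g := by
    rw [descIff, hd1_def, hd2_def]
    calc prod.map g (𝟙 _) ≫ prod.map (𝟙 W) (pullback.fst bX bX) ≫ ev0
        = prod.map (𝟙 Th) (pullback.fst bX bX) ≫ prod.map g (𝟙 X0) ≫ ev0 := by
          rw [← Category.assoc, ← Category.assoc, prod.map_map, prod.map_map]
          simp only [Category.comp_id, Category.id_comp]
      _ = prod.map (𝟙 Th) (pullback.fst bX bX ≫ bX) ≫ prod.map u (𝟙 X) ≫ d := by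
          rw [hg, prodMap_comp_right]
      _ = prod.map (𝟙 Th) (pullback.snd bX bX ≫ bX) ≫ prod.map u (𝟙 X) ≫ d := by
          rw [pullback.condition]
      _ = prod.map (𝟙 Th) (pullback.snd bX bX) ≫ prod.map g (𝟙 X0) ≫ ev0 := by
          rw [hg, prodMap_comp_right]
      _ = prod.map g (𝟙 _) ≫ prod.map (𝟙 W) (pullback.snd bX bX) ≫ ev0 := by
          rw [← Category.assoc, ← Category.assoc, prod.map_map, prod.map_map]
          simp only [Category.comp_id, Category.id_comp]
  obtain ⟨gh, hgh⟩ := hgW'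
  -- the evaluation of any relation-compatible lift agrees with `d`
  have hevc : ∀ (T' : E) (c : T' ⟶ Th),
      prod.map ((c ≫ gh) ≫ i) (𝟙 X0) ≫ ev0
        = prod.map (𝟙 T') bX ≫ prod.map (c ≫ u) (𝟙 X) ≫ d := by
    intro T' c
    calc prod.map ((c ≫ gh) ≫ i) (𝟙 X0) ≫ ev0
        = prod.map (c ≫ g) (𝟙 X0) ≫ ev0 := by rw [Category.assoc, hgh]
      _ = prod.map c (𝟙 X0) ≫ prod.map g (𝟙 X0) ≫ ev0 := prodMap_comp_left _ _ _
      _ = prod.map c (𝟙 X0) ≫ prod.map (𝟙 Th) bX ≫ prod.map u (𝟙 X) ≫ d := by rw [hg]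
      _ = prod.map (𝟙 T') bX ≫ prod.map c (𝟙 X) ≫ prod.map u (𝟙 X) ≫ d := by
          rw [← Category.assoc, map_id_comm, Category.assoc]
      _ = prod.map (𝟙 T') bX ≫ prod.map (c ≫ u) (𝟙 X) ≫ d := by
          rw [← prodMap_comp_left]
  -- the transpose descends along `u`
  have hdescend : pullback.fst u u ≫ gh ≫ t = pullback.snd u u ≫ gh ≫ t := by
    have heq : prod.map ((pullback.fst u u ≫ gh) ≫ i) (𝟙 X0) ≫ ev0
        = prod.map ((pullback.snd u u ≫ gh) ≫ i) (𝟙 X0) ≫ ev0 := by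
      rw [hevc _ (pullback.fst u u), hevc _ (pullback.snd u u), pullback.condition]
    obtain ⟨s, hs⟩ := (hr' _ _ _).mpr heq
    have h1 : pullback.fst u u ≫ gh = s ≫ ρ₁ := by
      rw [hρ₁_def, ← Category.assoc, hs, prod.lift_fst]
    have h2 : pullback.snd u u ≫ gh = s ≫ ρ₂ := by
      rw [hρ₂_def, ← Category.assoc, hs, prod.lift_snd]
    rw [← Category.assoc, ← Category.assoc, h1, h2, Category.assoc, Category.assoc, hwt]
  obtain ⟨h0, hh0⟩ := regEpi_desc hu (gh ≫ t) hdescend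
  haveI : Epi (prod.map u bX) := (regEpi_prodMap hE hu hbX).epi
  have hsplit_tb : ∀ (c : Th ⟶ W'), prod.map (c ≫ t) bX ≫ ev
      = prod.map (c ≫ i) (𝟙 X0) ≫ ev0 := by
    intro c
    have h1 : prod.map (c ≫ t) bX = prod.map c (𝟙 X0) ≫ prod.map t bX := by
      rw [prod.map_map, Category.id_comp]
    have h2 : prod.map (c ≫ i) (𝟙 X0) = prod.map c (𝟙 X0) ≫ prod.map i (𝟙 X0) := by
      rw [prod.map_map, Category.id_comp]
    rw [h1, h2, Category.assoc, hev, Category.assoc]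
  have hprop : prod.map h0 (𝟙 X) ≫ ev = d := by
    rw [← cancel_epi (prod.map u bX)]
    calc prod.map u bX ≫ prod.map h0 (𝟙 X) ≫ ev
        = prod.map (u ≫ h0) bX ≫ ev := by
          rw [← Category.assoc, prod.map_map, Category.comp_id]
      _ = prod.map (gh ≫ t) bX ≫ ev := by rw [hh0]
      _ = prod.map (gh ≫ i) (𝟙 X0) ≫ ev0 := hsplit_tb gh
      _ = prod.map ((𝟙 Th ≫ gh) ≫ i) (𝟙 X0) ≫ ev0 := by rw [Category.id_comp]
      _ = prod.map (𝟙 Th) bX ≫ prod.map (𝟙 Th ≫ u) (𝟙 X) ≫ d := hevc Th (𝟙 Th)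
      _ = prod.map (𝟙 Th) bX ≫ prod.map u (𝟙 X) ≫ d := by rw [Category.id_comp]
      _ = prod.map u bX ≫ d := by
          rw [← Category.assoc, prod.map_map, Category.id_comp, Category.comp_id]
  refine ⟨h0, hprop, ?_⟩
  intro y hy
  obtain ⟨s, hst⟩ := hP.1 Th hTh t ht (u ≫ y)
  have hevy : ∀ (z : T ⟶ Ex) (c : Th ⟶ W'), c ≫ t = u ≫ z →
      prod.map z (𝟙 X) ≫ ev = d →
      prod.map (c ≫ i) (𝟙 X0) ≫ ev0 = prod.map u bX ≫ d := by
    intro z c hc hz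
    calc prod.map (c ≫ i) (𝟙 X0) ≫ ev0 = prod.map (c ≫ t) bX ≫ ev := (hsplit_tb c).symm
      _ = prod.map (u ≫ z) bX ≫ ev := by rw [hc]
      _ = prod.map u bX ≫ prod.map z (𝟙 X) ≫ ev := by
          rw [← Category.assoc, prod.map_map, Category.comp_id]
      _ = prod.map u bX ≫ d := by rw [hz]
  have heq : prod.map (s ≫ i) (𝟙 X0) ≫ ev0 = prod.map (gh ≫ i) (𝟙 X0) ≫ ev0 := by
    rw [hevy y s hst hy, hevy h0 gh hh0.symm hprop]
  obtain ⟨σ, hσ⟩ := (hr' Th s gh).mpr heq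
  have h1 : s ≫ t = σ ≫ ρ₁ ≫ t := by
    rw [← Category.assoc, hρ₁_def, ← Category.assoc, hσ, prod.lift_fst]
  have h2 : gh ≫ t = σ ≫ ρ₂ ≫ t := by
    rw [← Category.assoc, hρ₂_def, ← Category.assoc, hσ, prod.lift_snd]
  have : u ≫ y = u ≫ h0 := by
    rw [← hst, hh0, h1, h2, hwt]
  exact (cancel_epi u).mp this

end Exponential

section Assemble
variable {E : Type u} [Category.{v} E] [HasFiniteLimits E]

lemma cartesianClosedP_of_hasGWSP (hE : IsExact E) {P : Set E} (hP : IsProjectiveCover P)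
    (hG : HasGWSP P) : CartesianClosedP E := by
  intro X
  choose Ex ev huniv using fun B => exists_exponential hE hP hG X B
  let tr : ∀ (B T : E), (T ⨯ X ⟶ B) → (T ⟶ Ex B) := fun B T d =>
    (huniv B T d).exists.choose
  have htr : ∀ (B T : E) (d : T ⨯ X ⟶ B), prod.map (tr B T d) (𝟙 X) ≫ ev B = d :=
    fun B T d => (huniv B T d).exists.choose_spec
  have huq : ∀ (B T : E) (d : T ⨯ X ⟶ B) (y : T ⟶ Ex B),
      prod.map y (𝟙 X) ≫ ev B = d → y = tr B T d :=
    fun B T d y hy => (huniv B T d).unique hy (htr B T d)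
  let G : E ⥤ E :=
    { obj := Ex
      map := fun {B B'} β => tr B' (Ex B) (ev B ≫ β)
      map_id := fun B => by
        refine (huq B (Ex B) (ev B ≫ 𝟙 B) (𝟙 (Ex B)) ?_).symm
        rw [prod.map_id_id, Category.id_comp, Category.comp_id]
      map_comp := fun {B B' B''} β γ => by
        refine (huq B'' (Ex B) (ev B ≫ β ≫ γ)
          (tr B' (Ex B) (ev B ≫ β) ≫ tr B'' (Ex B') (ev B' ≫ γ)) ?_).symm
        rw [prodMap_comp_left, htr, ← Category.assoc, htr, Category.assoc] }
  refine ⟨⟨G, ⟨Adjunction.mkOfHomEquiv ?_⟩⟩⟩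
  refine
    { homEquiv := fun T B =>
        { toFun := fun d => tr B T d
          invFun := fun g => prod.map g (𝟙 X) ≫ ev B
          left_inv := fun d => htr B T d
          right_inv := fun g => (huq B T (prod.map g (𝟙 X) ≫ ev B) g rfl).symm }
      homEquiv_naturality_left_symm := ?_
      homEquiv_naturality_right := ?_ }
  · intro T' T B f g
    show prod.map (f ≫ g) (𝟙 X) ≫ ev B
      = prod.map f (𝟙 X) ≫ prod.map g (𝟙 X) ≫ ev B
    exact prodMap_comp_left f g (ev B)
  · intro T B B' f g
    show tr B' T (f ≫ g) = tr B T f ≫ tr B' (Ex B) (ev B ≫ g)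
    refine (huq B' T (f ≫ g) _ ?_).symm
    rw [prodMap_comp_left, htr, ← Category.assoc, htr B T f]

end Assemble

/-- `E` is cartesian closed iff `P` has generalised weak simple
products. -/
theorem stmt15 {E : Type u} [Category.{v} E] [HasFiniteLimits E]
    (hE : IsExact E) (P : Set E) (hP : IsProjectiveCover P) :
    CartesianClosedP E ↔ HasGWSP P :=
  ⟨fun h => hasGWSP_of_cartesianClosed hE P hP h,
   fun h => cartesianClosedP_of_hasGWSP hE hP h⟩

end ExComp
end

section
/- Let E be an exact category with enough projectives and P a projective cover of E. If P has generalised weak simple products, then P has generalised weak exponentials: for every object X of P and every pseudo equivalence relation y1, y2 : Y1 ⇉ Y0 in P, a generalised weak exponential of X and y1, y2 exists. -/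
open CategoryTheory Limits

namespace ExComp

universe v u

variable {E : Type u} [Category.{v} E]

/-- If `P` has generalised weak simple products, then `P` has
generalised weak exponentials. -/
theorem stmt16 {E : Type u} [Category.{v} E] [HasFiniteLimits E]
    (hE : IsExact E) (P : Set E) (hP : IsProjectiveCover P)
    (h : HasGWSP P) :
    ∀ ⦃X Y1 Y0 : E⦄, X ∈ P → Y1 ∈ P → Y0 ∈ P →
      ∀ (y₁ y₂ : Y1 ⟶ Y0), IsPseudoEquivRel y₁ y₂ →
      ∃ (W V : E) (p : V ⟶ W) (q : V ⟶ X) (e : V ⟶ Y0),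
        IsGWExp P y₁ y₂ W V p q e := by
  intro X Y1 Y0 hX hY1 hY0 y₁ y₂ hy
  obtain ⟨hproj, hcov⟩ := hP
  obtain ⟨R, er, mR, hre, hrm, hrc, hR⟩ := hy
  haveI : Mono mR := hrm
  obtain ⟨J, hJ, j, hj⟩ := hcov (⊤_ E)
  obtain ⟨Y0t, hY0t, c, hc⟩ := hcov (J ⨯ (Y0 ⨯ X))
  obtain ⟨f, u, g, hcfug⟩ : ∃ (f : Y0t ⟶ J) (u : Y0t ⟶ Y0) (g : Y0t ⟶ X),
      c = prod.lift f (prod.lift u g) :=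
    ⟨c ≫ prod.fst, c ≫ prod.snd ≫ prod.fst, c ≫ prod.snd ≫ prod.snd, by
      apply Limits.prod.hom_ext
      · simp [prod.lift_fst, prod.lift_snd, prod.lift_fst_assoc, prod.lift_snd_assoc]
      · apply Limits.prod.hom_ext <;> simp [prod.lift_fst, prod.lift_snd, prod.lift_fst_assoc, prod.lift_snd_assoc]⟩
  have liftC : ∀ ⦃T : E⦄, T ∈ P → ∀ (a : T ⟶ J) (b : T ⟶ Y0) (x : T ⟶ X),
      ∃ l : T ⟶ Y0t, l ≫ f = a ∧ l ≫ u = b ∧ l ≫ g = x := by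
    intro T hT a b x
    obtain ⟨l, hl⟩ := hproj _ hT c hc (prod.lift a (prod.lift b x))
    rw [hcfug] at hl
    refine ⟨l, ?_, ?_, ?_⟩
    · simpa [prod.lift_fst, prod.lift_snd, prod.lift_fst_assoc, prod.lift_snd_assoc] using congrArg (· ≫ prod.fst) hl
    · simpa [prod.lift_fst, prod.lift_snd, prod.lift_fst_assoc, prod.lift_snd_assoc] using congrArg (· ≫ prod.snd ≫ prod.fst) hl
    · simpa [prod.lift_fst, prod.lift_snd, prod.lift_fst_assoc, prod.lift_snd_assoc] using congrArg (· ≫ prod.snd ≫ prod.snd) hl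
  -- build the relation subobject S of Y0t ⨯ Y0t
  obtain ⟨S, ιM, rS, hmono, hcond, hSf, hSg, mkS⟩ :
      ∃ (S : E) (ιM : S ⟶ Y0t ⨯ Y0t) (rS : S ⟶ R),
        Mono ιM ∧ ιM ≫ prod.map u u = rS ≫ mR ∧
        ιM ≫ prod.fst ≫ f = ιM ≫ prod.snd ≫ f ∧
        ιM ≫ prod.fst ≫ g = ιM ≫ prod.snd ≫ g ∧
        ∀ (T : E) (a b : T ⟶ Y0t) (r : T ⟶ R), prod.lift (a ≫ u) (b ≫ u) = r ≫ mR →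
          a ≫ f = b ≫ f → a ≫ g = b ≫ g →
          ∃ s : T ⟶ S, s ≫ ιM = prod.lift a b ∧ s ≫ rS = r := by
    refine ⟨equalizer
        (equalizer.ι (pullback.fst (prod.map u u) mR ≫ prod.fst ≫ f)
            (pullback.fst (prod.map u u) mR ≫ prod.snd ≫ f) ≫
          pullback.fst (prod.map u u) mR ≫ prod.fst ≫ g)
        (equalizer.ι _ _ ≫ pullback.fst (prod.map u u) mR ≫ prod.snd ≫ g),
      equalizer.ι _ _ ≫ equalizer.ι _ _ ≫ pullback.fst (prod.map u u) mR,
      equalizer.ι _ _ ≫ equalizer.ι _ _ ≫ pullback.snd (prod.map u u) mR,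
      ?_, ?_, ?_, ?_, ?_⟩
    · exact mono_comp _ _
    · simp only [Category.assoc, pullback.condition]
    · have hq := equalizer.condition (pullback.fst (prod.map u u) mR ≫ prod.fst ≫ f)
        (pullback.fst (prod.map u u) mR ≫ prod.snd ≫ f)
      simp only [Category.assoc] at hq ⊢
      rw [hq]
    · have hq := equalizer.condition
        (equalizer.ι (pullback.fst (prod.map u u) mR ≫ prod.fst ≫ f)
            (pullback.fst (prod.map u u) mR ≫ prod.snd ≫ f) ≫
          pullback.fst (prod.map u u) mR ≫ prod.fst ≫ g)
        (equalizer.ι _ _ ≫ pullback.fst (prod.map u u) mR ≫ prod.snd ≫ g)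
      simp only [Category.assoc] at hq ⊢
      rw [hq]
    · intro T a b r hr hfab hgab
      have h0 : prod.lift a b ≫ prod.map u u = r ≫ mR := by rw [prod.lift_map, hr]
      refine ⟨equalizer.lift (equalizer.lift (pullback.lift (prod.lift a b) r h0) ?_) ?_,
        ?_, ?_⟩
      · simp only [Category.assoc, pullback.lift_fst_assoc, prod.lift_fst_assoc,
          prod.lift_snd_assoc, hfab]
      · simp only [Category.assoc, equalizer.lift_ι_assoc, pullback.lift_fst_assoc,
          prod.lift_fst_assoc, prod.lift_snd_assoc, hgab]
      · simp only [Category.assoc, equalizer.lift_ι_assoc, pullback.lift_fst]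
      · simp only [Category.assoc, equalizer.lift_ι_assoc, pullback.lift_snd]
  have hc1 : rS ≫ mR ≫ prod.fst = ιM ≫ prod.fst ≫ u := by
    rw [← Category.assoc, ← hcond]; simp
  have hc2 : rS ≫ mR ≫ prod.snd = ιM ≫ prod.snd ≫ u := by
    rw [← Category.assoc, ← hcond]; simp
  have hy1 : er ≫ mR ≫ prod.fst = y₁ := by rw [← Category.assoc, hrc]; simp [prod.lift_fst, prod.lift_snd, prod.lift_fst_assoc, prod.lift_snd_assoc]
  have hy2 : er ≫ mR ≫ prod.snd = y₂ := by rw [← Category.assoc, hrc]; simp [prod.lift_fst, prod.lift_snd, prod.lift_fst_assoc, prod.lift_snd_assoc]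
  -- S is an equivalence relation
  have hEq : IsEquivRelPair (ιM ≫ prod.fst) (ιM ≫ prod.snd) := by
    constructor
    · intro T hh kk h1 h2
      rw [← cancel_mono ιM]
      apply Limits.prod.hom_ext
      · simpa [prod.lift_fst, prod.lift_snd, prod.lift_fst_assoc, prod.lift_snd_assoc] using h1
      · simpa [prod.lift_fst, prod.lift_snd, prod.lift_fst_assoc, prod.lift_snd_assoc] using h2
    · obtain ⟨dR, hd1, hd2⟩ := hR.refl
      have hdm : dR ≫ mR = prod.lift (𝟙 _) (𝟙 _) := by
        apply Limits.prod.hom_ext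
        · simpa [prod.lift_fst, prod.lift_snd, prod.lift_fst_assoc, prod.lift_snd_assoc] using hd1
        · simpa [prod.lift_fst, prod.lift_snd, prod.lift_fst_assoc, prod.lift_snd_assoc] using hd2
      have hcnd : prod.lift (𝟙 Y0t ≫ u) (𝟙 Y0t ≫ u) = (u ≫ dR) ≫ mR := by
        rw [Category.assoc, hdm]
        apply Limits.prod.hom_ext <;> simp
      obtain ⟨s, hs1, hs2⟩ := mkS Y0t (𝟙 _) (𝟙 _) (u ≫ dR) hcnd rfl rfl
      refine ⟨s, ?_, ?_⟩
      · rw [← Category.assoc, hs1]; simp [prod.lift_fst, prod.lift_snd, prod.lift_fst_assoc, prod.lift_snd_assoc]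
      · rw [← Category.assoc, hs1]; simp [prod.lift_fst, prod.lift_snd, prod.lift_fst_assoc, prod.lift_snd_assoc]
    · obtain ⟨sR, hsy1, hsy2⟩ := hR.symm
      have hsm : sR ≫ mR = prod.lift (mR ≫ prod.snd) (mR ≫ prod.fst) := by
        apply Limits.prod.hom_ext
        · simpa [prod.lift_fst, prod.lift_snd, prod.lift_fst_assoc, prod.lift_snd_assoc] using hsy1
        · simpa [prod.lift_fst, prod.lift_snd, prod.lift_fst_assoc, prod.lift_snd_assoc] using hsy2
      have hcnd : prod.lift ((ιM ≫ prod.snd) ≫ u) ((ιM ≫ prod.fst) ≫ u) =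
          (rS ≫ sR) ≫ mR := by
        apply Limits.prod.hom_ext
        · simp only [Category.assoc, prod.lift_fst]
          rw [hsy1, hc2]
        · simp only [Category.assoc, prod.lift_snd]
          rw [hsy2, hc1]
      have hcf' : (ιM ≫ prod.snd) ≫ f = (ιM ≫ prod.fst) ≫ f := by
        simp only [Category.assoc]; rw [hSf]
      have hcg' : (ιM ≫ prod.snd) ≫ g = (ιM ≫ prod.fst) ≫ g := by
        simp only [Category.assoc]; rw [hSg]
      obtain ⟨s, hs1, hs2⟩ := mkS S (ιM ≫ prod.snd) (ιM ≫ prod.fst) (rS ≫ sR) hcnd hcf' hcg'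
      refine ⟨s, ?_, ?_⟩
      · rw [← Category.assoc, hs1]; simp [prod.lift_fst, prod.lift_snd, prod.lift_fst_assoc, prod.lift_snd_assoc]
      · rw [← Category.assoc, hs1]; simp [prod.lift_fst, prod.lift_snd, prod.lift_fst_assoc, prod.lift_snd_assoc]
    · intro T pp qq hpq
      have hpq2 : ∀ {Z : E} (z : Y0t ⟶ Z),
          pp ≫ ιM ≫ prod.snd ≫ z = qq ≫ ιM ≫ prod.fst ≫ z := by
        intro Z z
        calc pp ≫ ιM ≫ prod.snd ≫ z = (pp ≫ (ιM ≫ prod.snd)) ≫ z := by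
              simp only [Category.assoc]
          _ = (qq ≫ (ιM ≫ prod.fst)) ≫ z := by rw [hpq]
          _ = qq ≫ ιM ≫ prod.fst ≫ z := by simp only [Category.assoc]
      have h1 : (pp ≫ rS) ≫ mR ≫ prod.snd = (qq ≫ rS) ≫ mR ≫ prod.fst := by
        simp only [Category.assoc]
        rw [hc2, hc1, hpq2 u]
      obtain ⟨tR, ht1, ht2⟩ := hR.trans (pp ≫ rS) (qq ≫ rS) (by
        simpa only [Category.assoc] using h1)
      have ht1' : tR ≫ mR ≫ prod.fst = pp ≫ rS ≫ mR ≫ prod.fst := by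
        simpa only [Category.assoc] using ht1
      have ht2' : tR ≫ mR ≫ prod.snd = qq ≫ rS ≫ mR ≫ prod.snd := by
        simpa only [Category.assoc] using ht2
      have hcnd : prod.lift ((pp ≫ ιM ≫ prod.fst) ≫ u) ((qq ≫ ιM ≫ prod.snd) ≫ u) =
          tR ≫ mR := by
        apply Limits.prod.hom_ext
        · simp only [Category.assoc, prod.lift_fst]
          rw [ht1', hc1]
        · simp only [Category.assoc, prod.lift_snd]
          rw [ht2', hc2]
      have hcf' : (pp ≫ ιM ≫ prod.fst) ≫ f = (qq ≫ ιM ≫ prod.snd) ≫ f := by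
        simp only [Category.assoc]
        rw [hSf, hpq2 f, hSf]
      have hcg' : (pp ≫ ιM ≫ prod.fst) ≫ g = (qq ≫ ιM ≫ prod.snd) ≫ g := by
        simp only [Category.assoc]
        rw [hSg, hpq2 g, hSg]
      obtain ⟨s, hs1, hs2⟩ := mkS T (pp ≫ ιM ≫ prod.fst) (qq ≫ ιM ≫ prod.snd) tR hcnd hcf' hcg'
      refine ⟨s, ?_, ?_⟩
      · rw [← Category.assoc, hs1]; simp only [prod.lift_fst, Category.assoc]
      · rw [← Category.assoc, hs1]; simp only [prod.lift_snd, Category.assoc]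
  -- the induced pseudo equivalence relation on Y0t
  obtain ⟨Y1t, hY1t, d, hd⟩ := hcov S
  have hty : prod.lift (d ≫ ιM ≫ prod.fst) (d ≫ ιM ≫ prod.snd) = d ≫ ιM := by
    apply Limits.prod.hom_ext <;> simp [prod.lift_fst, prod.lift_snd, prod.lift_fst_assoc, prod.lift_snd_assoc]
  have hper : IsPseudoEquivRel (d ≫ ιM ≫ prod.fst) (d ≫ ιM ≫ prod.snd) :=
    ⟨S, d, ιM, hd, hmono, hty.symm, hEq⟩
  have hcf : (d ≫ ιM ≫ prod.fst) ≫ f = (d ≫ ιM ≫ prod.snd) ≫ f := by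
    simp only [Category.assoc]; rw [hSf]
  have hcg : (d ≫ ιM ≫ prod.fst) ≫ g = (d ≫ ιM ≫ prod.snd) ≫ g := by
    simp only [Category.assoc]; rw [hSg]
  obtain ⟨W, V, w, p, q, et, gw⟩ :=
    h hY1t hY0t hJ hX (d ≫ ιM ≫ prod.fst) (d ≫ ιM ≫ prod.snd) hper f g hcf hcg
  -- the answer: W, V, p, q, et ≫ u
  have presE : PreservesProjWP P p q y₁ y₂ (et ≫ u) := by
    intro V1 v₁ v₂ heq
    obtain ⟨t, ht1, ht2⟩ := gw.cone.pres v₁ v₂ heq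
    obtain ⟨t', ht'⟩ := hproj _ heq.mem er hre (t ≫ d ≫ rS)
    have key : ∀ (vv : V1 ⟶ V) (pr : Y0t ⨯ Y0t ⟶ Y0t),
        t ≫ (d ≫ ιM ≫ pr) = vv ≫ et →
        t ≫ d ≫ ιM ≫ pr ≫ u = vv ≫ et ≫ u := by
      intro vv pr hpr
      calc t ≫ d ≫ ιM ≫ pr ≫ u = (t ≫ (d ≫ ιM ≫ pr)) ≫ u := by
            simp only [Category.assoc]
        _ = (vv ≫ et) ≫ u := by rw [hpr]
        _ = vv ≫ et ≫ u := by simp only [Category.assoc]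
    refine ⟨t', ?_, ?_⟩
    · rw [← hy1, ← Category.assoc, ht']
      simp only [Category.assoc]
      rw [hc1]
      exact key v₁ prod.fst ht1
    · rw [← hy2, ← Category.assoc, ht']
      simp only [Category.assoc]
      rw [hc2]
      exact key v₂ prod.snd ht2
  refine ⟨W, V, p, q, et ≫ u, ⟨⟨gw.cone.memW, gw.cone.wp, presE⟩, ?_⟩⟩
  intro W' V' p' q' e' hcone'
  obtain ⟨w', -⟩ := hproj _ hcone'.memW j hj (terminal.from W')
  obtain ⟨et', he1, he2, he3⟩ := liftC hcone'.wp.mem (p' ≫ w') e' q'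
  have pres' : PreservesProjWP P p' q' (d ≫ ιM ≫ prod.fst) (d ≫ ιM ≫ prod.snd) et' := by
    intro V1 v₁ v₂ heq
    obtain ⟨t, ht1, ht2⟩ := hcone'.pres v₁ v₂ heq
    have hwp : v₁ ≫ p' = v₂ ≫ p' := by
      simpa [prod.lift_fst, prod.lift_snd, prod.lift_fst_assoc, prod.lift_snd_assoc] using congrArg (· ≫ prod.fst) heq.w
    have hwq : v₁ ≫ q' = v₂ ≫ q' := by
      simpa [prod.lift_fst, prod.lift_snd, prod.lift_fst_assoc, prod.lift_snd_assoc] using congrArg (· ≫ prod.snd) heq.w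
    have hcnd : prod.lift ((v₁ ≫ et') ≫ u) ((v₂ ≫ et') ≫ u) = (t ≫ er) ≫ mR := by
      apply Limits.prod.hom_ext
      · simp only [Category.assoc, prod.lift_fst]
        rw [hy1, ht1, he2]
      · simp only [Category.assoc, prod.lift_snd]
        rw [hy2, ht2, he2]
    have hcf' : (v₁ ≫ et') ≫ f = (v₂ ≫ et') ≫ f := by
      simp only [Category.assoc]
      rw [he1, ← Category.assoc, ← Category.assoc, hwp]
    have hcg' : (v₁ ≫ et') ≫ g = (v₂ ≫ et') ≫ g := by
      simp only [Category.assoc]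
      rw [he3, hwq]
    obtain ⟨s, hs1, hs2⟩ := mkS V1 (v₁ ≫ et') (v₂ ≫ et') (t ≫ er) hcnd hcf' hcg'
    obtain ⟨tt, htt⟩ := hproj _ heq.mem d hd s
    refine ⟨tt, ?_, ?_⟩
    · calc tt ≫ d ≫ ιM ≫ prod.fst = ((tt ≫ d) ≫ ιM) ≫ prod.fst := by
            simp only [Category.assoc]
        _ = (s ≫ ιM) ≫ prod.fst := by rw [htt]
        _ = v₁ ≫ et' := by rw [hs1]; simp [prod.lift_fst, prod.lift_snd, prod.lift_fst_assoc, prod.lift_snd_assoc]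
    · calc tt ≫ d ≫ ιM ≫ prod.snd = ((tt ≫ d) ≫ ιM) ≫ prod.snd := by
            simp only [Category.assoc]
        _ = (s ≫ ιM) ≫ prod.snd := by rw [htt]
        _ = v₂ ≫ et' := by rw [hs1]; simp [prod.lift_fst, prod.lift_snd, prod.lift_fst_assoc, prod.lift_snd_assoc]
  have cone' : GWSPCone P (d ≫ ιM ≫ prod.fst) (d ≫ ιM ≫ prod.snd) f g W' V' w' p' q' et' :=
    ⟨hcone'.memW, hcone'.wp, pres', he1.symm, he3.symm⟩
  obtain ⟨α, β, -, hb1, hb2, hb3⟩ := gw.lift w' p' q' et' cone'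
  exact ⟨α, β, hb1, hb2, by rw [← Category.assoc, hb3, he2]⟩


end ExComp
end

section
/- Let C be the poset whose underlying set is ℕ together with two additional elements a and b, partially ordered by the reflexive-transitive closure of the relations n < n + 1, n < a, and n < b for every n ∈ ℕ (so a and b are incomparable). In the category of presheaves of sets on C: (i) the image of the unique morphism from the presheaf y(ℕ) := ∐_{n ∈ ℕ} y(n) to the terminal presheaf is the subterminal presheaf y(a) × y(b); (ii) the terminal presheaf is not projective with respect to epimorphisms; and (iii) the presheaf y(a) × y(b) is not projective with respect to epimorphisms, even though y(a) and y(b) are projective. In particular, a product of two projective objects in a presheaf topos need not be projective. -/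
open CategoryTheory Limits

namespace Stmt19

/-- The underlying set of the poset `C`: the natural numbers together with two extra
elements `a` and `b`. -/
inductive Cob : Type
  | nat : ℕ → Cob
  | a : Cob
  | b : Cob

namespace Cob

/-- The order on `C`: the reflexive-transitive closure of `n < n + 1`, `n < a` and
`n < b` (so `a` and `b` are incomparable, and above all naturals). -/
def le : Cob → Cob → Prop
  | .nat n, .nat m => n ≤ m
  | .nat _, .a => True
  | .nat _, .b => True
  | .a, .a => True
  | .b, .b => True
  | _, _ => False

instance : PartialOrder Cob where
  le := Cob.le
  le_refl x := by cases x <;> simp [Cob.le]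
  le_trans x y z hxy hyz := by
    cases x <;> cases y <;> cases z <;> simp_all [Cob.le] <;> omega
  le_antisymm x y hxy hyx := by
    cases x <;> cases y <;> simp_all [Cob.le] <;> omega

/-- The generating relations hold in the order. -/
theorem nat_le_succ (n : ℕ) : Cob.nat n ≤ Cob.nat (n + 1) := by
  show Cob.le _ _; simp [Cob.le]

theorem nat_le_a (n : ℕ) : Cob.nat n ≤ Cob.a := trivial

theorem nat_le_b (n : ℕ) : Cob.nat n ≤ Cob.b := trivial

theorem not_a_le_b : ¬ (Cob.a ≤ Cob.b) := fun h => h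

theorem not_b_le_a : ¬ (Cob.b ≤ Cob.a) := fun h => h

end Cob

/-- The presheaf `y(ℕ) = ∐_{n ∈ ℕ} y(n)`. -/
noncomputable def yN : Cobᵒᵖ ⥤ Type := ∐ fun n : ℕ => yoneda.obj (Cob.nat n)

/-- The representable presheaf `y(a)`. -/
def yA : Cobᵒᵖ ⥤ Type := yoneda.obj Cob.a

/-- The representable presheaf `y(b)`. -/
def yB : Cobᵒᵖ ⥤ Type := yoneda.obj Cob.b

instance homSub (x y : Cob) : Subsingleton (x ⟶ y) :=
  ⟨fun ⟨⟨_⟩⟩ ⟨⟨_⟩⟩ => rfl⟩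

lemma subsingleton_obj (F : Cobᵒᵖ ⥤ Type) (x : Cob)
    (h : ∀ f g : yoneda.obj x ⟶ F, f = g) : Subsingleton (F.obj (Opposite.op x)) :=
  ⟨fun u v => by
    have := congrArg yonedaEquiv (h (yonedaEquiv.symm u) (yonedaEquiv.symm v))
    simpa using this⟩

lemma homs_to_prod_eq {Z : Cobᵒᵖ ⥤ Type} (f g : Z ⟶ yA ⨯ yB) : f = g := by
  apply Limits.prod.hom_ext <;>
  · apply NatTrans.ext; funext c; ext z
    exact Subsingleton.elim (α := Opposite.unop c ⟶ _) _ _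

lemma sub_prod (x : Cob) : Subsingleton ((yA ⨯ yB).obj (Opposite.op x)) :=
  subsingleton_obj _ _ fun f g => homs_to_prod_eq f g

lemma sub_top (x : Cob) : Subsingleton ((⊤_ (Cobᵒᵖ ⥤ Type)).obj (Opposite.op x)) :=
  subsingleton_obj _ _ fun f g => Subsingleton.elim f g


def D1obj : Cob → Type
  | .nat _ => Bool
  | .a => PUnit
  | .b => PUnit

def D1map : ∀ {x y : Cob}, x ≤ y → D1obj y → D1obj x
  | .nat _, .nat _, _ => id
  | .nat _, .a, _ => fun _ => true
  | .nat _, .b, _ => fun _ => false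
  | .a, .a, _ => id
  | .b, .b, _ => id
  | .a, .nat _, h => (h : False).elim
  | .b, .nat _, h => (h : False).elim
  | .a, .b, h => (h : False).elim
  | .b, .a, h => (h : False).elim

def D1 : Cobᵒᵖ ⥤ Type where
  obj c := D1obj c.unop
  map f := TypeCat.ofHom (D1map (leOfHom f.unop))
  map_id := by
    intro ⟨x⟩; cases x <;> rfl
  map_comp := by
    intro ⟨x⟩ ⟨y⟩ ⟨z⟩ f g
    cases x <;> cases y <;> cases z <;>
      first
        | rfl
        | exact ((leOfHom f.unop : Cob.le _ _) : False).elim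
        | exact ((leOfHom g.unop : Cob.le _ _) : False).elim

def D2obj : Cob → Type
  | .nat m => {k : ℕ // m ≤ k}
  | .a => PEmpty
  | .b => PEmpty

def D2map : ∀ {x y : Cob}, x ≤ y → D2obj y → D2obj x
  | .nat _, .nat _, h => fun k => ⟨k.1, le_trans h k.2⟩
  | .nat _, .a, _ => fun e => e.elim
  | .nat _, .b, _ => fun e => e.elim
  | .a, .a, _ => id
  | .b, .b, _ => id
  | .a, .nat _, h => (h : False).elim
  | .b, .nat _, h => (h : False).elim
  | .a, .b, h => (h : False).elim
  | .b, .a, h => (h : False).elim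

def D2 : Cobᵒᵖ ⥤ Type where
  obj c := D2obj c.unop
  map f := TypeCat.ofHom (D2map (leOfHom f.unop))
  map_id := by
    intro ⟨x⟩; cases x <;> (try rfl) <;> (funext e; exact e.elim)
  map_comp := by
    intro ⟨x⟩ ⟨y⟩ ⟨z⟩ f g
    cases x <;> cases y <;> cases z <;>
      first
        | rfl
        | exact ((leOfHom f.unop : Cob.le _ _) : False).elim
        | exact ((leOfHom g.unop : Cob.le _ _) : False).elim
        | (ext e; exact e.elim)


def uapp : ∀ x : Cob, (x ⟶ Cob.a) → D1obj x
  | .nat _, _ => true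
  | .a, _ => PUnit.unit
  | .b, h => (Cob.not_b_le_a (leOfHom h)).elim

def uD1 : yA ⟶ D1 where
  app c := TypeCat.ofHom (uapp c.unop)
  naturality := by
    intro ⟨x⟩ ⟨y⟩ f
    ext z
    cases x <;> cases y <;>
      first
        | rfl
        | exact ((leOfHom f.unop : Cob.le _ _) : False).elim
        | exact (Cob.not_b_le_a (leOfHom z)).elim

def vapp : ∀ x : Cob, (x ⟶ Cob.b) → D1obj x
  | .nat _, _ => false
  | .b, _ => PUnit.unit
  | .a, h => (Cob.not_a_le_b (leOfHom h)).elim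

def vD1 : yB ⟶ D1 where
  app c := TypeCat.ofHom (vapp c.unop)
  naturality := by
    intro ⟨x⟩ ⟨y⟩ f
    ext z
    cases x <;> cases y <;>
      first
        | rfl
        | exact ((leOfHom f.unop : Cob.le _ _) : False).elim
        | exact (Cob.not_a_le_b (leOfHom z)).elim

noncomputable def wD2 : yN ⟶ D2 :=
  Sigma.desc fun n => yonedaEquiv.symm (⟨n, Nat.le_refl n⟩ : D2obj (Cob.nat n))

lemma no_hom_D1 (F : Cobᵒᵖ ⥤ Type)
    (hne : ∀ x : Cob, Nonempty (F.obj (Opposite.op x)))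
    (hsub : ∀ x : Cob, Subsingleton (F.obj (Opposite.op x)))
    (t : F ⟶ D1) : False := by
  obtain ⟨x0⟩ := hne (.nat 0)
  obtain ⟨xa⟩ := hne .a
  obtain ⟨xb⟩ := hne .b
  have ha := types_congr_hom (t.naturality ((homOfLE (Cob.nat_le_a 0)).op)) xa
  have hb := types_congr_hom (t.naturality ((homOfLE (Cob.nat_le_b 0)).op)) xb
  simp only [types_comp_apply] at ha hb
  rw [(hsub _).elim (F.map _ xa) x0] at ha
  rw [(hsub _).elim (F.map _ xb) x0] at hb
  have : (true : Bool) = false := by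
    calc (true : Bool) = (show Bool from t.app (Opposite.op (Cob.nat 0)) x0) := ha.symm
    _ = false := hb
  simp at this

lemma no_hom_D2 (F : Cobᵒᵖ ⥤ Type)
    (hne : ∀ m : ℕ, Nonempty (F.obj (Opposite.op (Cob.nat m))))
    (hsub : ∀ m : ℕ, Subsingleton (F.obj (Opposite.op (Cob.nat m))))
    (t : F ⟶ D2) : False := by
  have x : ∀ m, F.obj (Opposite.op (Cob.nat m)) := fun m => (hne m).some
  have key : ∀ m : ℕ, (show {k : ℕ // m ≤ k} from t.app (Opposite.op (Cob.nat m)) (x m)).1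
      = (show {k : ℕ // 0 ≤ k} from t.app (Opposite.op (Cob.nat 0)) (x 0)).1 := by
    intro m
    induction m with
    | zero => rfl
    | succ m ih =>
      have h := types_congr_hom (t.naturality ((homOfLE (Cob.nat_le_succ m)).op)) (x (m+1))
      simp only [types_comp_apply] at h
      rw [(hsub m).elim (F.map _ (x (m+1))) (x m)] at h
      have := congrArg Subtype.val h
      exact this.symm.trans ih
  have hle : ∀ m : ℕ, m ≤ (show {k : ℕ // 0 ≤ k} from t.app (Opposite.op (Cob.nat 0)) (x 0)).1 :=
    fun m => key m ▸ (t.app (Opposite.op (Cob.nat m)) (x m)).2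
  have := hle ((show {k : ℕ // 0 ≤ k} from t.app (Opposite.op (Cob.nat 0)) (x 0)).1 + 1)
  omega


noncomputable def eMap : yN ⟶ yA ⨯ yB :=
  prod.lift (Sigma.desc fun n => yoneda.map (homOfLE (Cob.nat_le_a n)))
    (Sigma.desc fun n => yoneda.map (homOfLE (Cob.nat_le_b n)))

lemma prod_nonempty (m : ℕ) : Nonempty ((yA ⨯ yB).obj (Opposite.op (Cob.nat m))) :=
  ⟨yonedaEquiv (prod.lift (yoneda.map (homOfLE (Cob.nat_le_a m)))
    (yoneda.map (homOfLE (Cob.nat_le_b m))))⟩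

lemma prod_empty_a : IsEmpty ((yA ⨯ yB).obj (Opposite.op Cob.a)) :=
  ⟨fun z => Cob.not_a_le_b (leOfHom ((prod.snd : yA ⨯ yB ⟶ yB).app (Opposite.op Cob.a) z))⟩

lemma prod_empty_b : IsEmpty ((yA ⨯ yB).obj (Opposite.op Cob.b)) :=
  ⟨fun z => Cob.not_b_le_a (leOfHom ((prod.fst : yA ⨯ yB ⟶ yA).app (Opposite.op Cob.b) z))⟩

lemma epi_eMap : Epi eMap := by
  rw [NatTrans.epi_iff_epi_app]
  intro ⟨x⟩
  rw [epi_iff_surjective]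
  intro y
  cases x with
  | nat m =>
    refine ⟨(Sigma.ι (fun n : ℕ => yoneda.obj (Cob.nat n)) m).app (Opposite.op (Cob.nat m)) (𝟙 _), ?_⟩
    exact (sub_prod (Cob.nat m)).elim _ y
  | a => exact (prod_empty_a.false y).elim
  | b => exact (prod_empty_b.false y).elim

lemma mono_from_prod : Mono (terminal.from (yA ⨯ yB)) :=
  ⟨fun g h _ => homs_to_prod_eq g h⟩

lemma top_nonempty (x : Cob) : Nonempty ((⊤_ (Cobᵒᵖ ⥤ Type)).obj (Opposite.op x)) :=
  ⟨yonedaEquiv (terminal.from (yoneda.obj x))⟩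

lemma coprod_nonempty (x : Cob) : Nonempty ((yA ⨿ yB).obj (Opposite.op x)) := by
  cases x with
  | nat n => exact ⟨(coprod.inl : yA ⟶ yA ⨿ yB).app (Opposite.op (Cob.nat n)) (homOfLE (Cob.nat_le_a n))⟩
  | a => exact ⟨(coprod.inl : yA ⟶ yA ⨿ yB).app (Opposite.op Cob.a) (𝟙 _)⟩
  | b => exact ⟨(coprod.inr : yB ⟶ yA ⨿ yB).app (Opposite.op Cob.b) (𝟙 _)⟩

lemma epi_from_coprod : Epi (terminal.from (yA ⨿ yB)) := by
  rw [NatTrans.epi_iff_epi_app]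
  intro ⟨x⟩
  rw [epi_iff_surjective]
  intro y
  obtain ⟨z⟩ := coprod_nonempty x
  exact ⟨z, (sub_top x).elim _ y⟩

lemma not_proj_top : ¬ Projective (⊤_ (Cobᵒᵖ ⥤ Type)) := by
  intro hp
  have := epi_from_coprod
  have s : (⊤_ (Cobᵒᵖ ⥤ Type)) ⟶ yA ⨿ yB :=
    Projective.factorThru (𝟙 _) (terminal.from (yA ⨿ yB))
  exact no_hom_D1 _ top_nonempty sub_top (s ≫ coprod.desc uD1 vD1)

lemma not_proj_prod : ¬ Projective (yA ⨯ yB) := by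
  intro hp
  have := epi_eMap
  have s : (yA ⨯ yB) ⟶ yN := Projective.factorThru (𝟙 _) eMap
  exact no_hom_D2 _ prod_nonempty (fun m => sub_prod _) (s ≫ wD2)

lemma proj_repr (x : Cob) : Projective (yoneda.obj x) := by
  constructor
  intro E X f e he
  have : Epi (e.app (Opposite.op x)) := inferInstance
  obtain ⟨u, hu⟩ := (epi_iff_surjective _).1 this (yonedaEquiv f)
  refine ⟨yonedaEquiv.symm u, yonedaEquiv.injective ?_⟩
  rw [yonedaEquiv_comp, Equiv.apply_symm_apply, hu]

/-- In presheaves on `C = ℕ ∪ {a, b}`: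
(i) the image of the unique morphism `y(ℕ) ⟶ 1` is the subterminal presheaf
`y(a) ⨯ y(b)`, i.e. the unique map factors as an epimorphism
`y(ℕ) ⟶ y(a) ⨯ y(b)` followed by the monomorphism `y(a) ⨯ y(b) ⟶ 1`;
(ii) the terminal presheaf is not projective;
(iii) `y(a) ⨯ y(b)` is not projective, although `y(a)` and `y(b)` are projective.
In particular a product of projectives need not be projective. -/
theorem stmt19 :
    (∃ e : yN ⟶ yA ⨯ yB, Epi e ∧ Mono (terminal.from (yA ⨯ yB)) ∧
        e ≫ terminal.from (yA ⨯ yB) = terminal.from yN) ∧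
    ¬ Projective (⊤_ (Cobᵒᵖ ⥤ Type)) ∧
    ¬ Projective (yA ⨯ yB) ∧
    Projective yA ∧ Projective yB := by
  refine ⟨⟨eMap, epi_eMap, mono_from_prod, Subsingleton.elim _ _⟩,
    not_proj_top, not_proj_prod, proj_repr _, proj_repr _⟩

end Stmt19
end
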